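/- arXiv:1802.03451 — 3 statements merged into one kernel-verified Lean document; each statement's English description precedes it below -/
import Mathlib

section
/- Let Â_1, Â_2, … be independent unbiased estimators of a symmetric real D×D matrix A, and let T̂_k be defined by the randomized Chebyshev recursion T̂_0 = I, T̂_1 = Â_1, T̂_k = 2Â_k T̂_{k-1} − T̂_{k-2}. Suppose 4E[‖Â_k‖²] + 2E[‖Â_k‖] + 1 ≤ α for all k, where ‖·‖ is the spectral norm. Then for all k ≥ 0, E[‖T̂_k‖_F²] ≤ D α^k. -/
open Matrix MeasureTheory ProbabilityTheory
open scoped Matrix.Norms.L2Operator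

noncomputable section

instance {D : ℕ} : MeasurableSpace (Matrix (Fin D) (Fin D) ℝ) :=
  inferInstanceAs (MeasurableSpace (Fin D → Fin D → ℝ))

/-- The randomized Chebyshev recursion `T̂_0 = I`, `T̂_1 = Â_1`,
`T̂_k = 2 Â_k T̂_{k-1} - T̂_{k-2}`. -/
def randChebT {D : ℕ} {Ω : Type*} (Ahat : ℕ → Ω → Matrix (Fin D) (Fin D) ℝ) :
    ℕ → Ω → Matrix (Fin D) (Fin D) ℝ
  | 0 => fun _ => 1
  | 1 => fun ω => Ahat 1 ω
  | (k + 2) => fun ω =>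
      (2 : ℝ) • (Ahat (k + 2) ω * randChebT Ahat (k + 1) ω) - randChebT Ahat k ω

/-- Squared Frobenius norm of a matrix. -/
def frobSq {D : ℕ} (M : Matrix (Fin D) (Fin D) ℝ) : ℝ :=
  ∑ i, ∑ j, (M i j) ^ 2

/-- Entrywise expectation of a random matrix. -/
def matExp {D : ℕ} {Ω : Type*} [MeasurableSpace Ω] (μ : Measure Ω)
    (X : Ω → Matrix (Fin D) (Fin D) ℝ) : Matrix (Fin D) (Fin D) ℝ :=
  Matrix.of fun i j => ∫ ω, X ω i j ∂μ

/-! ### Auxiliary lemmas -/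

instance {D : ℕ} : BorelSpace (Matrix (Fin D) (Fin D) ℝ) := Pi.borelSpace

/-- The `j`-th column of a matrix, as a vector of `EuclideanSpace`. -/
def mcol {D : ℕ} (M : Matrix (Fin D) (Fin D) ℝ) (j : Fin D) : EuclideanSpace ℝ (Fin D) :=
  (EuclideanSpace.equiv (Fin D) ℝ).symm (fun i => M i j)

lemma norm_mcol_sq {D : ℕ} (M : Matrix (Fin D) (Fin D) ℝ) (j : Fin D) :
    ‖mcol M j‖ ^ 2 = ∑ i, (M i j) ^ 2 := by
  rw [EuclideanSpace.norm_eq, Real.sq_sqrt (by positivity)]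
  simp [mcol, sq_abs]

lemma frobSq_eq_sum_mcol {D : ℕ} (M : Matrix (Fin D) (Fin D) ℝ) :
    frobSq M = ∑ j, ‖mcol M j‖ ^ 2 := by
  rw [frobSq, Finset.sum_comm]
  simp [norm_mcol_sq]

lemma frobSq_nonneg {D : ℕ} (M : Matrix (Fin D) (Fin D) ℝ) : 0 ≤ frobSq M := by
  rw [frobSq]; positivity

lemma mcol_mul {D : ℕ} (X Y : Matrix (Fin D) (Fin D) ℝ) (j : Fin D) :
    mcol (X * Y) j = (EuclideanSpace.equiv (Fin D) ℝ).symm (X *ᵥ (mcol Y j)) := by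
  ext i
  simp [mcol, Matrix.mul_apply, Matrix.mulVec, dotProduct]

lemma norm_mcol_mul_le {D : ℕ} (X Y : Matrix (Fin D) (Fin D) ℝ) (j : Fin D) :
    ‖mcol (X * Y) j‖ ≤ ‖X‖ * ‖mcol Y j‖ := by
  rw [mcol_mul]
  exact X.l2_opNorm_mulVec (mcol Y j)

lemma norm_mcol_le {D : ℕ} (M : Matrix (Fin D) (Fin D) ℝ) (j : Fin D) :
    ‖mcol M j‖ ≤ ‖M‖ := by
  have h : mcol M j = (EuclideanSpace.equiv (Fin D) ℝ).symm
      (M *ᵥ (EuclideanSpace.single j (1:ℝ))) := by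
    ext i
    simp [mcol, Matrix.mulVec, dotProduct, EuclideanSpace.single_apply]
  calc ‖mcol M j‖ ≤ ‖M‖ * ‖EuclideanSpace.single j (1:ℝ)‖ := by
        rw [h]; exact M.l2_opNorm_mulVec _
    _ = ‖M‖ := by simp [EuclideanSpace.norm_single]

lemma frobSq_le_card_opNorm {D : ℕ} (M : Matrix (Fin D) (Fin D) ℝ) :
    frobSq M ≤ D * ‖M‖ ^ 2 := by
  rw [frobSq_eq_sum_mcol]
  calc ∑ j, ‖mcol M j‖ ^ 2 ≤ ∑ _j : Fin D, ‖M‖ ^ 2 :=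
        Finset.sum_le_sum fun j _ => by
          have := norm_mcol_le M j
          have h0 : (0:ℝ) ≤ ‖mcol M j‖ := norm_nonneg _
          nlinarith
    _ = D * ‖M‖ ^ 2 := by simp [mul_comm]

lemma amgm_aux (u v b s : ℝ) (hb : 0 ≤ b) (hs : 0 < s) (hbs : b * s = 1) :
    2 * (u * v) ≤ b * u ^ 2 + s * v ^ 2 := by
  nlinarith [mul_nonneg hb (sq_nonneg (u - s * v))]

lemma mcol_step {D : ℕ} (X Y Z : Matrix (Fin D) (Fin D) ℝ) (j : Fin D) :
    mcol ((2:ℝ) • (X * Y) - Z) j = (2:ℝ) • mcol (X * Y) j - mcol Z j := by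
  ext i
  simp [mcol, Matrix.sub_apply, Matrix.smul_apply]

lemma key_pointwise {D : ℕ} (X Y Z : Matrix (Fin D) (Fin D) ℝ) (b s : ℝ)
    (hb : 0 ≤ b) (hs : 0 < s) (hbs : b * s = 1) :
    frobSq ((2:ℝ) • (X * Y) - Z) ≤
      4 * ‖X‖ ^ 2 * frobSq Y + 2 * ‖X‖ * (b * frobSq Y + s * frobSq Z) + frobSq Z := by
  rw [frobSq_eq_sum_mcol, frobSq_eq_sum_mcol Y, frobSq_eq_sum_mcol Z]
  have term : ∀ j : Fin D, ‖mcol ((2:ℝ) • (X * Y) - Z) j‖ ^ 2 ≤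
      4 * ‖X‖ ^ 2 * ‖mcol Y j‖ ^ 2 + 2 * ‖X‖ * (b * ‖mcol Y j‖ ^ 2)
        + 2 * ‖X‖ * (s * ‖mcol Z j‖ ^ 2) + ‖mcol Z j‖ ^ 2 := by
    intro j
    set u := ‖mcol Y j‖ with hu
    set v := ‖mcol Z j‖ with hv
    have hXn : (0:ℝ) ≤ ‖X‖ := norm_nonneg _
    have hun : 0 ≤ u := norm_nonneg _
    have hvn : 0 ≤ v := norm_nonneg _
    have h1 : ‖mcol ((2:ℝ) • (X * Y) - Z) j‖ ≤ 2 * ‖X‖ * u + v := by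
      rw [mcol_step]
      calc ‖(2:ℝ) • mcol (X * Y) j - mcol Z j‖ ≤ ‖(2:ℝ) • mcol (X * Y) j‖ + ‖mcol Z j‖ :=
            norm_sub_le _ _
        _ ≤ 2 * (‖X‖ * u) + v := by
            rw [norm_smul]
            gcongr
            · simp
            · exact norm_mcol_mul_le X Y j
        _ = 2 * ‖X‖ * u + v := by ring
    have h2 : ‖mcol ((2:ℝ) • (X * Y) - Z) j‖ ^ 2 ≤ (2 * ‖X‖ * u + v) ^ 2 := by
      have := norm_nonneg (mcol ((2:ℝ) • (X * Y) - Z) j)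
      nlinarith
    have h3 : 2 * (u * v) ≤ b * u ^ 2 + s * v ^ 2 := amgm_aux u v b s hb hs hbs
    have h4 := mul_le_mul_of_nonneg_left h3 (by positivity : (0:ℝ) ≤ 2 * ‖X‖)
    nlinarith
  calc ∑ j : Fin D, ‖mcol ((2:ℝ) • (X * Y) - Z) j‖ ^ 2
      ≤ ∑ j : Fin D, (4 * ‖X‖ ^ 2 * ‖mcol Y j‖ ^ 2 + 2 * ‖X‖ * (b * ‖mcol Y j‖ ^ 2)
        + 2 * ‖X‖ * (s * ‖mcol Z j‖ ^ 2) + ‖mcol Z j‖ ^ 2) :=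
        Finset.sum_le_sum fun j _ => term j
    _ = 4 * ‖X‖ ^ 2 * (∑ j, ‖mcol Y j‖ ^ 2)
        + 2 * ‖X‖ * (b * (∑ j, ‖mcol Y j‖ ^ 2) + s * (∑ j, ‖mcol Z j‖ ^ 2))
        + ∑ j, ‖mcol Z j‖ ^ 2 := by
        simp only [Finset.sum_add_distrib, ← Finset.mul_sum]
        ring

lemma measurable_entry {D : ℕ} {Ω : Type*} [MeasurableSpace Ω]
    {X : Ω → Matrix (Fin D) (Fin D) ℝ} (hX : Measurable X) (i j : Fin D) :
    Measurable fun ω => X ω i j :=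
  (measurable_pi_apply j).comp ((measurable_pi_apply i).comp hX)

lemma measurable_chebStep {D : ℕ} {Ω : Type*} [MeasurableSpace Ω]
    {X Y Z : Ω → Matrix (Fin D) (Fin D) ℝ} (hX : Measurable X) (hY : Measurable Y)
    (hZ : Measurable Z) :
    Measurable fun ω => (2:ℝ) • (X ω * Y ω) - Z ω := by
  apply measurable_pi_lambda
  intro i
  apply measurable_pi_lambda
  intro j
  have : (fun ω => ((2:ℝ) • (X ω * Y ω) - Z ω) i j)
      = fun ω => 2 * (∑ l, X ω i l * Y ω l j) - Z ω i j := by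
    funext ω
    simp [Matrix.sub_apply, Matrix.smul_apply, Matrix.mul_apply]
  rw [this]
  exact (measurable_const.mul
    (Finset.measurable_sum _ fun l _ =>
      (measurable_entry hX i l).mul (measurable_entry hY l j))).sub
    (measurable_entry hZ i j)

lemma measurable_randChebT {D : ℕ} {Ω : Type*} [MeasurableSpace Ω]
    (Ahat : ℕ → Ω → Matrix (Fin D) (Fin D) ℝ) (hmeas : ∀ k, Measurable (Ahat k)) :
    ∀ n, Measurable (randChebT Ahat n)
  | 0 => measurable_const
  | 1 => hmeas 1
  | (n + 2) => by
      have h1 := measurable_randChebT Ahat hmeas (n + 1)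
      have h0 := measurable_randChebT Ahat hmeas n
      exact measurable_chebStep (hmeas (n + 2)) h1 h0

lemma measurable_frobSq {D : ℕ} : Measurable (frobSq (D := D)) := by
  apply Finset.measurable_sum
  intro i _
  apply Finset.measurable_sum
  intro j _
  exact ((measurable_pi_apply j).comp (measurable_pi_apply i)).pow_const 2

lemma randChebT_eval {D : ℕ} {Ω Ω' : Type*} (B : ℕ → Ω' → Matrix (Fin D) (Fin D) ℝ)
    (A : ℕ → Ω → Matrix (Fin D) (Fin D) ℝ) (g : Ω → Ω') :
    ∀ n, (∀ j, j ≤ n → ∀ ω, B j (g ω) = A j ω) →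
      ∀ ω, randChebT B n (g ω) = randChebT A n ω
  | 0, _, _ => rfl
  | 1, h, ω => h 1 le_rfl ω
  | (n + 2), h, ω => by
      have h1 := randChebT_eval B A g (n + 1) (fun j hj => h j (by omega)) ω
      have h0 := randChebT_eval B A g n (fun j hj => h j (by omega)) ω
      show (2:ℝ) • (B (n+2) (g ω) * randChebT B (n+1) (g ω)) - randChebT B n (g ω)
          = (2:ℝ) • (A (n+2) ω * randChebT A (n+1) ω) - randChebT A n ω
      rw [h1, h0, h (n + 2) le_rfl ω]

lemma indep_phi_frobSq {D : ℕ} {Ω : Type*} [MeasurableSpace Ω] (μ : Measure Ω)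
    (Ahat : ℕ → Ω → Matrix (Fin D) (Fin D) ℝ) (hmeas : ∀ k, Measurable (Ahat k))
    (hindep : iIndepFun Ahat μ)
    (φ : Matrix (Fin D) (Fin D) ℝ → ℝ) (hφ : Measurable φ) (n k : ℕ) (hnk : n < k) :
    IndepFun (fun ω => φ (Ahat k ω)) (fun ω => frobSq (randChebT Ahat n ω)) μ := by
  classical
  have hd : Disjoint ({k} : Finset ℕ) (Finset.range (n + 1)) := by
    simp only [Finset.disjoint_singleton_left, Finset.mem_range]
    omega
  have h := hindep.indepFun_finset {k} (Finset.range (n + 1)) hd hmeas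
  set B : ℕ → ((i : (Finset.range (n + 1) : Finset ℕ)) → Matrix (Fin D) (Fin D) ℝ)
      → Matrix (Fin D) (Fin D) ℝ :=
    fun j v => if hj : j ∈ Finset.range (n + 1) then v ⟨j, hj⟩ else 0 with hB
  have hBmeas : ∀ j, Measurable (B j) := by
    intro j
    by_cases hj : j ∈ Finset.range (n + 1)
    · simpa only [hB, dif_pos hj] using
        (measurable_pi_apply (⟨j, hj⟩ : (Finset.range (n + 1) : Finset ℕ)))
    · simpa only [hB, dif_neg hj] using
        (measurable_const : Measurable fun _ : (i : (Finset.range (n + 1) : Finset ℕ)) →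
          Matrix (Fin D) (Fin D) ℝ => (0 : Matrix (Fin D) (Fin D) ℝ))
  have hg1 : Measurable fun v : (i : ({k} : Finset ℕ)) → Matrix (Fin D) (Fin D) ℝ =>
      φ (v ⟨k, Finset.mem_singleton_self k⟩) := hφ.comp (measurable_pi_apply _)
  have hg2 : Measurable fun v : (i : (Finset.range (n + 1) : Finset ℕ)) →
      Matrix (Fin D) (Fin D) ℝ => frobSq (randChebT B n v) :=
    measurable_frobSq.comp (measurable_randChebT B hBmeas n)
  have hcomp := h.comp hg1 hg2
  have e2 : (fun v : (i : (Finset.range (n + 1) : Finset ℕ)) → Matrix (Fin D) (Fin D) ℝ =>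
        frobSq (randChebT B n v)) ∘ (fun a (i : (Finset.range (n + 1) : Finset ℕ)) => Ahat i a)
      = fun ω => frobSq (randChebT Ahat n ω) := by
    funext ω
    simp only [Function.comp_apply]
    congr 1
    exact randChebT_eval B Ahat (fun a (i : (Finset.range (n + 1) : Finset ℕ)) => Ahat i a) n
      (fun j hj ω' => by
        rw [hB]
        simp only []
        rw [dif_pos (Finset.mem_range.mpr (by omega))]) ω
  rw [e2] at hcomp
  exact hcomp

/-- Variance bound for the randomized Chebyshev recursion: if
`4 E[‖Â_k‖²] + 2 E[‖Â_k‖] + 1 ≤ α` for all `k` (spectral norm), then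
`E[‖T̂_k‖_F²] ≤ D α^k` for all `k`. -/
theorem frobSq_randChebT_le {D : ℕ} {Ω : Type*} [MeasurableSpace Ω]
    (μ : Measure Ω) [IsProbabilityMeasure μ]
    (A : Matrix (Fin D) (Fin D) ℝ) (hAsymm : A.IsSymm)
    (Ahat : ℕ → Ω → Matrix (Fin D) (Fin D) ℝ)
    (hmeas : ∀ k, Measurable (Ahat k))
    (hindep : iIndepFun Ahat μ)
    (hL2 : ∀ k, MemLp (fun ω => ‖Ahat k ω‖) 2 μ)
    (hunbiased : ∀ k, matExp μ (Ahat k) = A)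
    (α : ℝ)
    (hα : ∀ k, 4 * (∫ ω, ‖Ahat k ω‖ ^ 2 ∂μ) + 2 * (∫ ω, ‖Ahat k ω‖ ∂μ) + 1 ≤ α)
    (k : ℕ) :
    (∫ ω, frobSq (randChebT Ahat k ω) ∂μ) ≤ D * α ^ k := by
  classical
  have hfmeas : ∀ n, Measurable fun ω => frobSq (randChebT Ahat n ω) :=
    fun n => measurable_frobSq.comp (measurable_randChebT Ahat hmeas n)
  have hInt2 : ∀ n, Integrable (fun ω => ‖Ahat n ω‖ ^ 2) μ := fun n => (hL2 n).integrable_sq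
  have hInt1 : ∀ n, Integrable (fun ω => ‖Ahat n ω‖) μ := fun n => (hL2 n).integrable one_le_two
  have ha2 : ∀ n, 0 ≤ ∫ ω, ‖Ahat n ω‖ ^ 2 ∂μ :=
    fun n => integral_nonneg fun ω => by positivity
  have ha1 : ∀ n, 0 ≤ ∫ ω, ‖Ahat n ω‖ ∂μ :=
    fun n => integral_nonneg fun ω => norm_nonneg _
  have hα1 : (1:ℝ) ≤ α := by have h := hα 0; have := ha2 0; have := ha1 0; linarith
  have hα0 : (0:ℝ) < α := by linarith
  set s := Real.sqrt α with hs_def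
  have hs : 0 < s := Real.sqrt_pos.mpr hα0
  have hs2 : s ^ 2 = α := Real.sq_sqrt hα0.le
  have hs1 : 1 ≤ s := by nlinarith
  have hb : (0:ℝ) ≤ s⁻¹ := (inv_pos.mpr hs).le
  have hbs : s⁻¹ * s = 1 := inv_mul_cancel₀ hs.ne'
  have hNmeas : Measurable fun M : Matrix (Fin D) (Fin D) ℝ => ‖M‖ := measurable_norm
  have key : ∀ n, Integrable (fun ω => frobSq (randChebT Ahat n ω)) μ ∧
      (∫ ω, frobSq (randChebT Ahat n ω) ∂μ) ≤ D * α ^ n := by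
    intro n
    induction n using Nat.strong_induction_on with
    | _ n ih =>
      rcases n with _ | _ | m
      · -- n = 0
        have h0 : (fun ω : Ω => frobSq (randChebT Ahat 0 ω)) = fun _ : Ω => (D:ℝ) := by
          funext ω
          show frobSq (1 : Matrix (Fin D) (Fin D) ℝ) = D
          simp [frobSq, Matrix.one_apply, apply_ite (fun x : ℝ => x ^ 2)]
        rw [h0]
        refine ⟨integrable_const _, ?_⟩
        rw [integral_const]
        simp
      · -- n = 1
        have e1 : ∀ ω, randChebT Ahat 1 ω = Ahat 1 ω := fun ω => rfl
        have hpt : ∀ ω, frobSq (randChebT Ahat 1 ω) ≤ D * ‖Ahat 1 ω‖ ^ 2 := by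
          intro ω
          rw [e1]
          exact frobSq_le_card_opNorm _
        have hDint : Integrable (fun ω => (D:ℝ) * ‖Ahat 1 ω‖ ^ 2) μ := (hInt2 1).const_mul _
        have hint : Integrable (fun ω => frobSq (randChebT Ahat 1 ω)) μ := by
          refine Integrable.mono' hDint (hfmeas 1).aestronglyMeasurable (ae_of_all _ fun ω => ?_)
          rw [Real.norm_eq_abs, abs_of_nonneg (frobSq_nonneg _)]
          exact hpt ω
        refine ⟨hint, ?_⟩
        calc ∫ ω, frobSq (randChebT Ahat 1 ω) ∂μ ≤ ∫ ω, (D:ℝ) * ‖Ahat 1 ω‖ ^ 2 ∂μ :=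
              integral_mono hint hDint hpt
          _ = D * ∫ ω, ‖Ahat 1 ω‖ ^ 2 ∂μ := integral_const_mul _ _
          _ ≤ D * α ^ 1 := by
              rw [pow_one]
              have h := hα 1
              have := ha1 1
              have := ha2 1
              exact mul_le_mul_of_nonneg_left (by linarith) (Nat.cast_nonneg D)
      · -- n = m + 2
        obtain ⟨int1, bd1⟩ := ih (m + 1) (by omega)
        obtain ⟨int0, bd0⟩ := ih m (by omega)
        set F1 : Ω → ℝ := fun ω => frobSq (randChebT Ahat (m + 1) ω) with hF1
        set F0 : Ω → ℝ := fun ω => frobSq (randChebT Ahat m ω) with hF0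
        set N1 : Ω → ℝ := fun ω => ‖Ahat (m + 2) ω‖ with hN1
        set N2 : Ω → ℝ := fun ω => ‖Ahat (m + 2) ω‖ ^ 2 with hN2
        have hN1m : Measurable N1 := hNmeas.comp (hmeas (m + 2))
        have hN2m : Measurable N2 := hN1m.pow_const 2
        have i2 : IndepFun N2 F1 μ :=
          indep_phi_frobSq μ Ahat hmeas hindep _ (hNmeas.pow_const 2) (m + 1) (m + 2) (by omega)
        have i11 : IndepFun N1 F1 μ :=
          indep_phi_frobSq μ Ahat hmeas hindep _ hNmeas (m + 1) (m + 2) (by omega)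
        have i10 : IndepFun N1 F0 μ :=
          indep_phi_frobSq μ Ahat hmeas hindep _ hNmeas m (m + 2) (by omega)
        have t2 : Integrable (fun ω => N2 ω * F1 ω) μ := i2.integrable_mul (hInt2 (m + 2)) int1
        have t11 : Integrable (fun ω => N1 ω * F1 ω) μ := i11.integrable_mul (hInt1 (m + 2)) int1
        have t10 : Integrable (fun ω => N1 ω * F0 ω) μ := i10.integrable_mul (hInt1 (m + 2)) int0
        set G : Ω → ℝ := fun ω =>
          4 * (N2 ω * F1 ω) + 2 * s⁻¹ * (N1 ω * F1 ω) + 2 * s * (N1 ω * F0 ω) + F0 ω with hG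
        have hGint : Integrable G μ :=
          (((t2.const_mul 4).add (t11.const_mul (2 * s⁻¹))).add (t10.const_mul (2 * s))).add int0
        have e2 : ∀ ω, randChebT Ahat (m + 2) ω =
            (2:ℝ) • (Ahat (m + 2) ω * randChebT Ahat (m + 1) ω) - randChebT Ahat m ω :=
          fun ω => rfl
        have hpt : ∀ ω, frobSq (randChebT Ahat (m + 2) ω) ≤ G ω := by
          intro ω
          rw [e2]
          have h := key_pointwise (Ahat (m + 2) ω) (randChebT Ahat (m + 1) ω)
            (randChebT Ahat m ω) s⁻¹ s hb hs hbs
          calc frobSq ((2:ℝ) • (Ahat (m + 2) ω * randChebT Ahat (m + 1) ω) - randChebT Ahat m ω)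
              ≤ 4 * ‖Ahat (m + 2) ω‖ ^ 2 * F1 ω
                + 2 * ‖Ahat (m + 2) ω‖ * (s⁻¹ * F1 ω + s * F0 ω) + F0 ω := h
            _ = G ω := by rw [hG]; ring
        have hint : Integrable (fun ω => frobSq (randChebT Ahat (m + 2) ω)) μ := by
          refine Integrable.mono' hGint (hfmeas (m + 2)).aestronglyMeasurable
            (ae_of_all _ fun ω => ?_)
          rw [Real.norm_eq_abs, abs_of_nonneg (frobSq_nonneg _)]
          exact hpt ω
        refine ⟨hint, ?_⟩
        have em2 : ∫ ω, N2 ω * F1 ω ∂μ = (∫ ω, N2 ω ∂μ) * ∫ ω, F1 ω ∂μ :=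
          i2.integral_fun_mul_eq_mul_integral hN2m.aestronglyMeasurable (hfmeas (m + 1)).aestronglyMeasurable
        have em11 : ∫ ω, N1 ω * F1 ω ∂μ = (∫ ω, N1 ω ∂μ) * ∫ ω, F1 ω ∂μ :=
          i11.integral_fun_mul_eq_mul_integral hN1m.aestronglyMeasurable (hfmeas (m + 1)).aestronglyMeasurable
        have em10 : ∫ ω, N1 ω * F0 ω ∂μ = (∫ ω, N1 ω ∂μ) * ∫ ω, F0 ω ∂μ :=
          i10.integral_fun_mul_eq_mul_integral hN1m.aestronglyMeasurable (hfmeas m).aestronglyMeasurable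
        have ti1 : Integrable (fun ω => 4 * (N2 ω * F1 ω)) μ := t2.const_mul 4
        have ti2 : Integrable (fun ω => 2 * s⁻¹ * (N1 ω * F1 ω)) μ := t11.const_mul _
        have ti3 : Integrable (fun ω => 2 * s * (N1 ω * F0 ω)) μ := t10.const_mul _
        have ti12 : Integrable (fun ω => 4 * (N2 ω * F1 ω) + 2 * s⁻¹ * (N1 ω * F1 ω)) μ :=
          ti1.add ti2
        have ti123 : Integrable (fun ω => 4 * (N2 ω * F1 ω) + 2 * s⁻¹ * (N1 ω * F1 ω)
            + 2 * s * (N1 ω * F0 ω)) μ := ti12.add ti3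
        have hIG : ∫ ω, G ω ∂μ =
            4 * ((∫ ω, N2 ω ∂μ) * (∫ ω, F1 ω ∂μ))
            + 2 * s⁻¹ * ((∫ ω, N1 ω ∂μ) * (∫ ω, F1 ω ∂μ))
            + 2 * s * ((∫ ω, N1 ω ∂μ) * (∫ ω, F0 ω ∂μ))
            + ∫ ω, F0 ω ∂μ := by
          simp only [hG]
          rw [integral_add ti123 int0, integral_add ti12 ti3, integral_add ti1 ti2,
            integral_const_mul, integral_const_mul, integral_const_mul, em2, em11, em10]
        set a2 : ℝ := ∫ ω, N2 ω ∂μ with ha2d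
        set a1 : ℝ := ∫ ω, N1 ω ∂μ with ha1d
        set M1 : ℝ := ∫ ω, F1 ω ∂μ with hM1d
        set M0 : ℝ := ∫ ω, F0 ω ∂μ with hM0d
        have bd1' : M1 ≤ (D:ℝ) * α ^ (m + 1) := bd1
        have bd0' : M0 ≤ (D:ℝ) * α ^ m := bd0
        have ha2n : 0 ≤ a2 := ha2 (m + 2)
        have ha1n : 0 ≤ a1 := ha1 (m + 2)
        have hM1n : 0 ≤ M1 := integral_nonneg fun ω => frobSq_nonneg _
        have hM0n : 0 ≤ M0 := integral_nonneg fun ω => frobSq_nonneg _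
        have hαK : 4 * a2 + 2 * a1 + 1 ≤ α := hα (m + 2)
        have hαm : (0:ℝ) ≤ α ^ m := by positivity
        have hDn : (0:ℝ) ≤ (D:ℝ) := Nat.cast_nonneg D
        -- bound each term
        have h1 : 4 * (a2 * M1) ≤ 4 * (a2 * ((D:ℝ) * α ^ (m + 1))) := by
          have := mul_le_mul_of_nonneg_left bd1' ha2n
          linarith
        have h2 : 2 * s⁻¹ * (a1 * M1) ≤ 2 * s⁻¹ * (a1 * ((D:ℝ) * α ^ (m + 1))) := by
          have h' := mul_le_mul_of_nonneg_left bd1' ha1n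
          have := mul_le_mul_of_nonneg_left h' (by positivity : (0:ℝ) ≤ 2 * s⁻¹)
          linarith
        have h3 : 2 * s * (a1 * M0) ≤ 2 * s * (a1 * ((D:ℝ) * α ^ m)) := by
          have h' := mul_le_mul_of_nonneg_left bd0' ha1n
          have := mul_le_mul_of_nonneg_left h' (by positivity : (0:ℝ) ≤ 2 * s)
          linarith
        have hsum : 4 * (a2 * ((D:ℝ) * α ^ (m + 1))) + 2 * s⁻¹ * (a1 * ((D:ℝ) * α ^ (m + 1)))
            + 2 * s * (a1 * ((D:ℝ) * α ^ m)) + (D:ℝ) * α ^ m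
            = (D:ℝ) * α ^ m * (4 * a2 * s ^ 2 + 4 * a1 * s + 1) := by
          rw [← hs2]
          field_simp
          ring
        have hinner : 4 * a2 * s ^ 2 + 4 * a1 * s + 1 ≤ s ^ 2 * s ^ 2 := by
          have hαK' : 4 * a2 + 2 * a1 + 1 ≤ s ^ 2 := by rw [hs2]; exact hαK
          nlinarith [mul_le_mul_of_nonneg_right hαK' (sq_nonneg s),
            mul_nonneg ha1n (sq_nonneg (s - 1)), sq_nonneg s]
        calc ∫ ω, frobSq (randChebT Ahat (m + 2) ω) ∂μ ≤ ∫ ω, G ω ∂μ :=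
              integral_mono hint hGint hpt
          _ = 4 * (a2 * M1) + 2 * s⁻¹ * (a1 * M1) + 2 * s * (a1 * M0) + M0 := hIG
          _ ≤ 4 * (a2 * ((D:ℝ) * α ^ (m + 1))) + 2 * s⁻¹ * (a1 * ((D:ℝ) * α ^ (m + 1)))
              + 2 * s * (a1 * ((D:ℝ) * α ^ m)) + (D:ℝ) * α ^ m := by linarith
          _ = (D:ℝ) * α ^ m * (4 * a2 * s ^ 2 + 4 * a1 * s + 1) := hsum
          _ ≤ (D:ℝ) * α ^ m * (s ^ 2 * s ^ 2) :=
              mul_le_mul_of_nonneg_left hinner (by positivity)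
          _ = (D:ℝ) * α ^ (m + 2) := by rw [hs2]; ring
  exact (key k).2
end
end

section
/- Let Â_k, T̂_k, α, D be as in the Chebyshev variance bound (E[‖T̂_k‖_F²] ≤ D α^k), let κ > 0, λ' ∈ (−1,1), and let γ_k(λ',κ) denote the von Mises Chebyshev coefficients γ_0 = 1/π, γ_k = (2/π)(I_k(κ)/I_0(κ)) cos(k cos⁻¹ λ') for k ≥ 1, with proposal q_k(λ',κ) ∝ |γ_k| (i.e., q_0 = 1/Z, q_k = (2/Z)(I_k(κ)/I_0(κ))|cos(k cos⁻¹ λ')|). Then E[‖(γ_k/q_k) T̂_k‖_F²] ≤ (D e^κ / (π² I_0(κ))) · (1 + (2e^κ/I_0(κ))(e^{ακ/2} − 1)), where the expectation is over k ~ q and the randomness of T̂_k. -/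
open Matrix MeasureTheory ProbabilityTheory Real
open scoped Matrix.Norms.L2Operator

noncomputable section

/-- The modified Bessel function of the first kind of integer order `k`. -/
def besselI (k : ℕ) (κ : ℝ) : ℝ :=
  ∑' m : ℕ, (κ / 2) ^ (2 * m + k) / ((m.factorial : ℝ) * ((m + k).factorial : ℝ))

instance matBorelAux {D : ℕ} : BorelSpace (Matrix (Fin D) (Fin D) ℝ) :=
  inferInstanceAs (BorelSpace (Fin D → Fin D → ℝ))

namespace Aux
variable {D : ℕ}

def toEuc (M : Matrix (Fin D) (Fin D) ℝ) : EuclideanSpace ℝ (Fin D × Fin D) :=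
  (WithLp.equiv 2 _).symm (fun p => M p.1 p.2)

def colE (M : Matrix (Fin D) (Fin D) ℝ) (j : Fin D) : EuclideanSpace ℝ (Fin D) :=
  (WithLp.equiv 2 _).symm (fun i => M i j)

def fn (M : Matrix (Fin D) (Fin D) ℝ) : ℝ := ‖toEuc M‖

lemma fn_nonneg (M : Matrix (Fin D) (Fin D) ℝ) : 0 ≤ fn M := norm_nonneg _

lemma fn_sq (M : Matrix (Fin D) (Fin D) ℝ) : fn M ^ 2 = frobSq M := by
  unfold fn frobSq
  rw [EuclideanSpace.norm_eq, Real.sq_sqrt (by positivity)]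
  rw [Fintype.sum_prod_type]
  refine Finset.sum_congr rfl fun i _ => Finset.sum_congr rfl fun j _ => ?_
  simp [toEuc, Real.norm_eq_abs, sq_abs]

lemma frobSq_nonneg (M : Matrix (Fin D) (Fin D) ℝ) : 0 ≤ frobSq M := by
  rw [← fn_sq]; positivity

lemma frobSq_eq_sum_col (M : Matrix (Fin D) (Fin D) ℝ) :
    frobSq M = ∑ j, ‖colE M j‖ ^ 2 := by
  unfold frobSq
  rw [Finset.sum_comm]
  refine Finset.sum_congr rfl fun j _ => ?_
  rw [EuclideanSpace.norm_eq, Real.sq_sqrt (by positivity)]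
  refine Finset.sum_congr rfl fun i _ => ?_
  simp [colE, Real.norm_eq_abs, sq_abs]

lemma fn_sub_le (X Y : Matrix (Fin D) (Fin D) ℝ) : fn (X - Y) ≤ fn X + fn Y := by
  have h : toEuc (X - Y) = toEuc X - toEuc Y := rfl
  unfold fn
  rw [h]
  exact norm_sub_le _ _

lemma fn_smul (c : ℝ) (X : Matrix (Fin D) (Fin D) ℝ) : fn (c • X) = |c| * fn X := by
  have h : toEuc (c • X) = c • toEuc X := rfl
  unfold fn
  rw [h, norm_smul, Real.norm_eq_abs]

lemma colE_mul (A B : Matrix (Fin D) (Fin D) ℝ) (j : Fin D) :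
    colE (A * B) j = (EuclideanSpace.equiv (Fin D) ℝ).symm (A *ᵥ (colE B j)) := rfl

lemma frobSq_mul_le (A B : Matrix (Fin D) (Fin D) ℝ) :
    frobSq (A * B) ≤ ‖A‖ ^ 2 * frobSq B := by
  rw [frobSq_eq_sum_col, frobSq_eq_sum_col, Finset.mul_sum]
  refine Finset.sum_le_sum fun j _ => ?_
  rw [colE_mul]
  calc ‖(EuclideanSpace.equiv (Fin D) ℝ).symm (A *ᵥ (colE B j))‖ ^ 2
      ≤ (‖A‖ * ‖colE B j‖) ^ 2 := by
        apply pow_le_pow_left₀ (norm_nonneg _) (Matrix.l2_opNorm_mulVec A _)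
    _ = ‖A‖ ^ 2 * ‖colE B j‖ ^ 2 := by ring

lemma fn_mul_le (A B : Matrix (Fin D) (Fin D) ℝ) : fn (A * B) ≤ ‖A‖ * fn B := by
  have h1 : fn (A * B) ^ 2 ≤ (‖A‖ * fn B) ^ 2 := by
    rw [fn_sq, mul_pow, fn_sq]
    exact frobSq_mul_le A B
  exact (pow_le_pow_iff_left₀ (fn_nonneg _) (mul_nonneg (norm_nonneg _) (fn_nonneg _))
    (by norm_num)).mp h1

lemma colE_eq_single (M : Matrix (Fin D) (Fin D) ℝ) (j : Fin D) :
    colE M j = (EuclideanSpace.equiv (Fin D) ℝ).symm (M *ᵥ (EuclideanSpace.single j 1)) := by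
  unfold colE
  apply congrArg
  funext i
  show M i j = (M *ᵥ Pi.single j 1) i
  simp [Matrix.mulVec_single]

lemma frobSq_le (M : Matrix (Fin D) (Fin D) ℝ) : frobSq M ≤ D * ‖M‖ ^ 2 := by
  rw [frobSq_eq_sum_col]
  calc ∑ j, ‖colE M j‖ ^ 2 ≤ ∑ _j : Fin D, ‖M‖ ^ 2 := by
        refine Finset.sum_le_sum fun j _ => ?_
        rw [colE_eq_single]
        apply pow_le_pow_left₀ (norm_nonneg _)
        calc ‖(EuclideanSpace.equiv (Fin D) ℝ).symm (M *ᵥ (EuclideanSpace.single j 1))‖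
            ≤ ‖M‖ * ‖EuclideanSpace.single j (1 : ℝ)‖ := Matrix.l2_opNorm_mulVec M _
          _ = ‖M‖ := by rw [EuclideanSpace.norm_single]; simp
    _ = D * ‖M‖ ^ 2 := by simp [Finset.sum_const]
  
lemma fn_le (M : Matrix (Fin D) (Fin D) ℝ) : fn M ≤ Real.sqrt D * ‖M‖ := by
  have h1 : fn M ^ 2 ≤ (Real.sqrt D * ‖M‖) ^ 2 := by
    rw [fn_sq, mul_pow, Real.sq_sqrt (by positivity)]
    exact frobSq_le M
  exact (pow_le_pow_iff_left₀ (fn_nonneg _)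
    (mul_nonneg (Real.sqrt_nonneg _) (norm_nonneg _)) (by norm_num)).mp h1

lemma frobSq_one : frobSq (1 : Matrix (Fin D) (Fin D) ℝ) = D := by
  unfold frobSq
  simp [Matrix.one_apply, ite_pow, Finset.sum_ite_eq]

lemma fn_one : fn (1 : Matrix (Fin D) (Fin D) ℝ) = Real.sqrt D := by
  have := fn_sq (1 : Matrix (Fin D) (Fin D) ℝ)
  rw [frobSq_one] at this
  rw [← Real.sqrt_sq (fn_nonneg _), this]

end Aux

namespace Aux

variable {κ : ℝ}

def ef (κ : ℝ) (n : ℕ) : ℝ := (κ / 2) ^ n / n.factorial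

lemma ef_nonneg (hκ : 0 ≤ κ) (n : ℕ) : 0 ≤ ef κ n := by unfold ef; positivity

lemma ef_summable (κ : ℝ) : Summable (ef κ) := Real.summable_pow_div_factorial _

lemma ef_tsum (κ : ℝ) : ∑' n, ef κ n = Real.exp (κ / 2) := by
  rw [Real.exp_eq_exp_ℝ, NormedSpace.exp_eq_tsum_div]
  rfl

def eg (κ : ℝ) (p : ℕ × ℕ) : ℝ := ef κ p.1 * ef κ p.2

lemma eg_nonneg (hκ : 0 ≤ κ) (p : ℕ × ℕ) : 0 ≤ eg κ p :=
  mul_nonneg (ef_nonneg hκ _) (ef_nonneg hκ _)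

lemma ef_norm_summable (κ : ℝ) : Summable fun n => ‖ef κ n‖ := by
  apply (Real.summable_pow_div_factorial (|κ| / 2)).congr
  intro n
  simp [ef, Real.norm_eq_abs, abs_div, abs_pow]

lemma eg_summable (κ : ℝ) : Summable (eg κ) :=
  summable_mul_of_summable_norm (ef_norm_summable κ) (ef_norm_summable κ)

lemma eg_tsum (κ : ℝ) : ∑' p, eg κ p = Real.exp κ := by
  have := tsum_mul_tsum_of_summable_norm (ef_norm_summable κ) (ef_norm_summable κ)
  have h2 : ∑' p : ℕ × ℕ, eg κ p = Real.exp (κ/2) * Real.exp (κ/2) := by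
    rw [← ef_tsum κ, this]; rfl
  rw [h2, ← Real.exp_add]; norm_num

lemma besselI_eq_tsum (k : ℕ) (κ : ℝ) : besselI k κ = ∑' m, ef κ m * ef κ (m + k) := by
  unfold besselI
  refine tsum_congr fun m => ?_
  unfold ef
  rw [div_mul_div_comm, ← pow_add]
  ring_nf

lemma ef_le_exp (hκ : 0 ≤ κ) (n : ℕ) : ef κ n ≤ Real.exp (κ / 2) := by
  rw [← ef_tsum κ]
  exact Summable.le_tsum (ef_summable κ) n fun m _ => ef_nonneg hκ m

lemma ef_add_le (hκ : 0 ≤ κ) (m k : ℕ) :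
    ef κ (m + k) ≤ (κ / 2) ^ k / k.factorial * ef κ m := by
  unfold ef
  rw [div_mul_div_comm, ← pow_add, add_comm k m]
  apply div_le_div_of_nonneg_left (by positivity) (by positivity)
  exact_mod_cast Nat.le_of_dvd (by positivity)
    (by simpa [add_comm] using Nat.factorial_mul_factorial_dvd_factorial_add k m)

lemma besselI_summable' (hκ : 0 ≤ κ) (k : ℕ) :
    Summable fun m => ef κ m * ef κ (m + k) := by
  refine Summable.of_nonneg_of_le
    (fun m => mul_nonneg (ef_nonneg hκ _) (ef_nonneg hκ _))
    (f := fun m => Real.exp (κ/2) * ef κ (m + k))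
    (fun m => mul_le_mul_of_nonneg_right (ef_le_exp hκ m) (ef_nonneg hκ _)) ?_
  exact ((ef_summable κ).comp_injective (add_left_injective k)).mul_left _

lemma besselI_nonneg (hκ : 0 ≤ κ) (k : ℕ) : 0 ≤ besselI k κ := by
  rw [besselI_eq_tsum]
  exact tsum_nonneg fun m => mul_nonneg (ef_nonneg hκ _) (ef_nonneg hκ _)

lemma one_le_besselI_zero (hκ : 0 ≤ κ) : 1 ≤ besselI 0 κ := by
  rw [besselI_eq_tsum]
  have h0 : (1 : ℝ) = ef κ 0 * ef κ (0 + 0) := by simp [ef]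
  rw [h0]
  exact Summable.le_tsum (besselI_summable' hκ 0) 0
    fun m _ => mul_nonneg (ef_nonneg hκ _) (ef_nonneg hκ _)

lemma besselI_pos (hκ : 0 < κ) (k : ℕ) : 0 < besselI k κ := by
  rw [besselI_eq_tsum]
  have h0 : 0 < ef κ 0 * ef κ (0 + k) := by
    unfold ef
    positivity
  exact lt_of_lt_of_le h0 (Summable.le_tsum (besselI_summable' hκ.le k) 0
    fun m _ => mul_nonneg (ef_nonneg hκ.le _) (ef_nonneg hκ.le _))

def dS1 : Set (ℕ × ℕ) := {p | p.1 = p.2}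
def dS2 : Set (ℕ × ℕ) := {p | p.1 < p.2}
def dS3 : Set (ℕ × ℕ) := {p | p.2 < p.1}

def e1 : ℕ ≃ dS1 where
  toFun := fun m => ⟨(m, m), rfl⟩
  invFun := fun p => p.1.1
  left_inv := fun m => rfl
  right_inv := by
    rintro ⟨⟨a, b⟩, h⟩
    have hab : a = b := h
    subst hab; rfl

def e2 : ℕ × ℕ ≃ dS2 where
  toFun := fun q => ⟨(q.2, q.2 + q.1 + 1), by show q.2 < q.2 + q.1 + 1; omega⟩
  invFun := fun p => (p.1.2 - p.1.1 - 1, p.1.1)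
  left_inv := by
    rintro ⟨k, m⟩
    have h : m + k + 1 - m - 1 = k := by omega
    simp [h]
  right_inv := by
    rintro ⟨⟨a, b⟩, h⟩
    have hab : a < b := h
    apply Subtype.ext
    have h2 : a + (b - a - 1) + 1 = b := by omega
    simp [h2]

def e3 : ℕ × ℕ ≃ dS3 where
  toFun := fun q => ⟨(q.2 + q.1 + 1, q.2), by show q.2 < q.2 + q.1 + 1; omega⟩
  invFun := fun p => (p.1.1 - p.1.2 - 1, p.1.2)
  left_inv := by
    rintro ⟨k, m⟩
    have h : m + k + 1 - m - 1 = k := by omega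
    simp [h]
  right_inv := by
    rintro ⟨⟨a, b⟩, h⟩
    have hab : b < a := h
    apply Subtype.ext
    have h2 : b + (a - b - 1) + 1 = a := by omega
    simp [h2]

lemma tsum_eg_S2 (κ : ℝ) : ∑' x : dS2, eg κ x = ∑' k, besselI (k + 1) κ := by
  rw [← e2.tsum_eq]
  have hs : Summable fun p : ℕ × ℕ => eg κ (e2 p) :=
    e2.summable_iff.mpr ((eg_summable κ).subtype dS2)
  rw [Summable.tsum_prod hs]
  refine tsum_congr fun k => ?_
  rw [besselI_eq_tsum]
  refine tsum_congr fun m => ?_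
  show ef κ m * ef κ (m + k + 1) = ef κ m * ef κ (m + (k + 1))
  rw [add_assoc]

lemma tsum_eg_S3 (κ : ℝ) : ∑' x : dS3, eg κ x = ∑' k, besselI (k + 1) κ := by
  rw [← e3.tsum_eq]
  have hs : Summable fun p : ℕ × ℕ => eg κ (e3 p) :=
    e3.summable_iff.mpr ((eg_summable κ).subtype dS3)
  rw [Summable.tsum_prod hs]
  refine tsum_congr fun k => ?_
  rw [besselI_eq_tsum]
  refine tsum_congr fun m => ?_
  show ef κ (m + k + 1) * ef κ m = ef κ m * ef κ (m + (k + 1))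
  rw [add_assoc, mul_comm]

lemma besselI_partition (hκ : 0 ≤ κ) :
    besselI 0 κ + 2 * ∑' k, besselI (k + 1) κ = Real.exp κ := by
  classical
  have hdecomp : eg κ = fun p => dS1.indicator (eg κ) p + dS2.indicator (eg κ) p
      + dS3.indicator (eg κ) p := by
    funext p
    rcases lt_trichotomy p.1 p.2 with h | h | h
    · simp [Set.indicator_apply, dS1, dS2, dS3, Set.mem_setOf_eq, h, h.ne, h.asymm]
    · simp [Set.indicator_apply, dS1, dS2, dS3, Set.mem_setOf_eq, h]
    · simp [Set.indicator_apply, dS1, dS2, dS3, Set.mem_setOf_eq, h, h.ne', h.asymm]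
  have h1 : ∑' x : dS1, eg κ x = besselI 0 κ := by
    rw [← e1.tsum_eq, besselI_eq_tsum]
    refine tsum_congr fun m => ?_
    show ef κ m * ef κ m = ef κ m * ef κ (m + 0)
    rw [add_zero]
  have h2 := tsum_eg_S2 κ
  have h3 := tsum_eg_S3 κ
  have htot := eg_tsum κ
  rw [hdecomp] at htot
  rw [Summable.tsum_add (((eg_summable κ).indicator dS1).add ((eg_summable κ).indicator dS2))
      ((eg_summable κ).indicator dS3),
    Summable.tsum_add ((eg_summable κ).indicator dS1) ((eg_summable κ).indicator dS2),
    ← tsum_subtype, ← tsum_subtype, ← tsum_subtype, h1, h2, h3] at htot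
  linarith

lemma besselI_zero_le_exp (hκ : 0 ≤ κ) : besselI 0 κ ≤ Real.exp κ := by
  have := besselI_partition hκ
  have h2 : 0 ≤ ∑' k, besselI (k + 1) κ := tsum_nonneg fun k => besselI_nonneg hκ _
  linarith

lemma besselI_le (hκ : 0 ≤ κ) (k : ℕ) :
    besselI k κ ≤ (κ / 2) ^ k / k.factorial * Real.exp κ := by
  have step : besselI k κ ≤ (κ / 2) ^ k / k.factorial * besselI 0 κ := by
    rw [besselI_eq_tsum, besselI_eq_tsum, ← tsum_mul_left]
    apply Summable.tsum_le_tsum _ (besselI_summable' hκ k) (((besselI_summable' hκ 0)).mul_left _)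
    intro m
    calc ef κ m * ef κ (m + k) ≤ ef κ m * ((κ / 2) ^ k / k.factorial * ef κ m) :=
          mul_le_mul_of_nonneg_left (ef_add_le hκ m k) (ef_nonneg hκ m)
      _ = (κ / 2) ^ k / k.factorial * (ef κ m * ef κ (m + 0)) := by rw [add_zero]; ring
  calc besselI k κ ≤ (κ / 2) ^ k / k.factorial * besselI 0 κ := step
    _ ≤ (κ / 2) ^ k / k.factorial * Real.exp κ :=
        mul_le_mul_of_nonneg_left (besselI_zero_le_exp hκ) (by positivity)

end Aux

namespace Aux

/-- scalar recursion dominating the Frobenius norm of `randChebT`. -/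
def uAux (c : ℝ) (r : ℕ → ℝ) : ℕ → ℝ
  | 0 => c
  | 1 => c * r 1
  | (k + 2) => 2 * r (k + 2) * uAux c r (k + 1) + uAux c r k

lemma uAux_nonneg {c : ℝ} (hc : 0 ≤ c) {r : ℕ → ℝ} (hr : ∀ i, 0 ≤ r i) :
    ∀ k, 0 ≤ uAux c r k
  | 0 => hc
  | 1 => mul_nonneg hc (hr 1)
  | (k + 2) => by
      have h1 := uAux_nonneg hc hr (k + 1)
      have h0 := uAux_nonneg hc hr k
      have h2 := hr (k + 2)
      simp only [uAux]
      positivity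

lemma uAux_measurable (c : ℝ) : ∀ k, Measurable fun r : ℕ → ℝ => uAux c r k
  | 0 => measurable_const
  | 1 => by show Measurable fun r : ℕ → ℝ => c * r 1; exact (measurable_pi_apply 1 : Measurable fun r : ℕ → ℝ => r 1).const_mul c
  | (k + 2) => by
      have h1 := uAux_measurable c (k + 1)
      have h0 := uAux_measurable c k
      simp only [uAux]
      exact (((measurable_pi_apply (k + 2)).const_mul 2).mul h1).add h0

lemma uAux_congr (c : ℝ) {r r' : ℕ → ℝ} :
    ∀ k, (∀ i, i ≤ k → r i = r' i) → uAux c r k = uAux c r' k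
  | 0, _ => rfl
  | 1, h => by simp only [uAux, h 1 le_rfl]
  | (k + 2), h => by
      simp only [uAux, h (k + 2) le_rfl,
        uAux_congr c (k + 1) (fun i hi => h i (by omega)),
        uAux_congr c k (fun i hi => h i (by omega))]

variable {D : ℕ} {Ω : Type*}

lemma randChebT_fn_le (Ahat : ℕ → Ω → Matrix (Fin D) (Fin D) ℝ) (ω : Ω) :
    ∀ k, fn (randChebT Ahat k ω) ≤ uAux (Real.sqrt D) (fun i => ‖Ahat i ω‖) k
  | 0 => by simp only [randChebT, uAux]; rw [fn_one]
  | 1 => by simpa only [randChebT, uAux] using fn_le (Ahat 1 ω)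
  | (k + 2) => by
      have h1 := randChebT_fn_le Ahat ω (k + 1)
      have h0 := randChebT_fn_le Ahat ω k
      simp only [randChebT, uAux]
      have hB : (0:ℝ) ≤ ‖Ahat (k + 2) ω‖ := norm_nonneg _
      calc fn ((2:ℝ) • (Ahat (k + 2) ω * randChebT Ahat (k + 1) ω) - randChebT Ahat k ω)
          ≤ fn ((2:ℝ) • (Ahat (k + 2) ω * randChebT Ahat (k + 1) ω))
            + fn (randChebT Ahat k ω) := fn_sub_le _ _
        _ = 2 * fn (Ahat (k + 2) ω * randChebT Ahat (k + 1) ω)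
            + fn (randChebT Ahat k ω) := by rw [fn_smul]; norm_num
        _ ≤ 2 * (‖Ahat (k + 2) ω‖ * fn (randChebT Ahat (k + 1) ω))
            + fn (randChebT Ahat k ω) := by
              have := fn_mul_le (Ahat (k + 2) ω) (randChebT Ahat (k + 1) ω)
              linarith
        _ ≤ 2 * ‖Ahat (k + 2) ω‖ * uAux (Real.sqrt D) (fun i => ‖Ahat i ω‖) (k + 1)
            + uAux (Real.sqrt D) (fun i => ‖Ahat i ω‖) k := by
              have := mul_le_mul_of_nonneg_left h1 hB
              linarith

/-- scalar inequalities -/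
lemma key1 {b β : ℝ} (hb : 0 ≤ b) (hβ : 1 ≤ β) (h : 4 * b ^ 2 + 2 * b + 1 ≤ β ^ 2) :
    2 * b * β + 1 ≤ β ^ 2 := by
  nlinarith [sq_nonneg (β - 2 * b - 1), sq_nonneg (β - 1), mul_nonneg hb (sub_nonneg.2 hβ),
    sq_nonneg (β - 2 * b), sq_nonneg (b - 1), mul_nonneg hb hb]

lemma key2 {b c β : ℝ} (hb : 0 ≤ b) (hc : 0 ≤ c) (hbc : b ^ 2 ≤ c) (hβ : 1 ≤ β)
    (h : 4 * c + 2 * b + 1 ≤ β ^ 2) : 4 * c * β ^ 2 + 4 * b * β + 1 ≤ β ^ 4 := by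
  have hβ0 : (0:ℝ) ≤ β := le_trans zero_le_one hβ
  have k1 : 2 * b * β + 1 ≤ β ^ 2 := key1 hb hβ (by nlinarith)
  have hββ : β ≤ β ^ 2 := by nlinarith
  have h2 : 2 * b * β ≤ 2 * b * β ^ 2 :=
    mul_le_mul_of_nonneg_left hββ (by linarith : (0:ℝ) ≤ 2 * b)
  have h3 : 4 * c * β ^ 2 + 2 * b * β ^ 2 + β ^ 2 ≤ β ^ 4 := by nlinarith
  linarith

lemma key0 {b β : ℝ} (hb : 0 ≤ b) (hβ : 1 ≤ β) (h : 4 * b ^ 2 + 2 * b + 1 ≤ β ^ 2) :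
    b ≤ β := by nlinarith

end Aux

namespace Aux

variable {D : ℕ} {Ω : Type*} [MeasurableSpace Ω]

/-- The dominating scalar process. -/
def uu (Ahat : ℕ → Ω → Matrix (Fin D) (Fin D) ℝ) (k : ℕ) (ω : Ω) : ℝ :=
  uAux (Real.sqrt D) (fun i => ‖Ahat i ω‖) k

lemma uu_nonneg (Ahat : ℕ → Ω → Matrix (Fin D) (Fin D) ℝ) (k : ℕ) (ω : Ω) :
    0 ≤ uu Ahat k ω :=
  uAux_nonneg (Real.sqrt_nonneg _) (fun i => norm_nonneg _) k

lemma uu_measurable (Ahat : ℕ → Ω → Matrix (Fin D) (Fin D) ℝ)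
    (hmeas : ∀ k, Measurable (Ahat k)) (k : ℕ) : Measurable (uu Ahat k) :=
  (uAux_measurable _ k).comp (measurable_pi_lambda _ fun i => (hmeas i).norm)

lemma indep_helper (μ : Measure Ω) (Ahat : ℕ → Ω → Matrix (Fin D) (Fin D) ℝ)
    (hmeas : ∀ k, Measurable (Ahat k))
    (hindep : iIndepFun Ahat μ)
    (k a b : ℕ) (ha : a ≤ k + 1) (hb : b ≤ k + 1) (p : ℕ) :
    IndepFun (fun ω => ‖Ahat (k + 2) ω‖ ^ p) (fun ω => uu Ahat a ω * uu Ahat b ω) μ := by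
  classical
  set S : Finset ℕ := {k + 2} with hS
  set T : Finset ℕ := Finset.range (k + 2) with hT
  have hd : Disjoint S T := by
    simp only [hS, hT, Finset.disjoint_singleton_left, Finset.mem_range]
    omega
  have base := hindep.indepFun_finset S T hd hmeas
  set φ : ({x // x ∈ S} → Matrix (Fin D) (Fin D) ℝ) → ℝ :=
    fun g => ‖g ⟨k + 2, Finset.mem_singleton_self _⟩‖ ^ p with hφdef
  set ext : ({x // x ∈ T} → Matrix (Fin D) (Fin D) ℝ) → (ℕ → ℝ) :=
    fun g i => if h : i ∈ T then ‖g ⟨i, h⟩‖ else 0 with hextdef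
  set ψ : ({x // x ∈ T} → Matrix (Fin D) (Fin D) ℝ) → ℝ :=
    fun g => uAux (Real.sqrt D) (ext g) a * uAux (Real.sqrt D) (ext g) b with hψdef
  have hφ : Measurable φ := ((measurable_pi_apply _).norm).pow_const p
  have hext : Measurable ext := by
    rw [hextdef]
    apply measurable_pi_lambda
    intro i
    by_cases h : i ∈ T
    · simp only [dif_pos h]
      exact (measurable_pi_apply _).norm
    · simp only [dif_neg h]
      exact measurable_const
  have hψ : Measurable ψ :=
    ((uAux_measurable _ a).comp hext).mul ((uAux_measurable _ b).comp hext)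
  have hcomp := base.comp hφ hψ
  have heq1 : (φ ∘ fun ω (i : {x // x ∈ S}) => Ahat i ω) = fun ω => ‖Ahat (k + 2) ω‖ ^ p := rfl
  have heq2 : (ψ ∘ fun ω (i : {x // x ∈ T}) => Ahat i ω)
      = fun ω => uu Ahat a ω * uu Ahat b ω := by
    funext ω
    show uAux (Real.sqrt D) (ext fun i : {x // x ∈ T} => Ahat i ω) a *
        uAux (Real.sqrt D) (ext fun i : {x // x ∈ T} => Ahat i ω) b = _
    unfold uu
    rw [uAux_congr (Real.sqrt D) a (r' := fun i => ‖Ahat i ω‖) ?_,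
        uAux_congr (Real.sqrt D) b (r' := fun i => ‖Ahat i ω‖) ?_]
    · intro i hi
      have hiT : i ∈ T := by simp only [hT, Finset.mem_range]; omega
      simp only [hextdef, dif_pos hiT]
    · intro i hi
      have hiT : i ∈ T := by simp only [hT, Finset.mem_range]; omega
      simp only [hextdef, dif_pos hiT]
  rw [heq1, heq2] at hcomp
  exact hcomp

end Aux

namespace Aux

variable {D : ℕ} {Ω : Type*} [MeasurableSpace Ω]

lemma moment_bound (μ : Measure Ω) [IsProbabilityMeasure μ]
    (Ahat : ℕ → Ω → Matrix (Fin D) (Fin D) ℝ)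
    (hmeas : ∀ k, Measurable (Ahat k))
    (hindep : iIndepFun Ahat μ)
    (hL2 : ∀ k, MemLp (fun ω => ‖Ahat k ω‖) 2 μ)
    (β : ℝ) (hβ : 1 ≤ β)
    (hα : ∀ k, 4 * (∫ ω, ‖Ahat k ω‖ ^ 2 ∂μ) + 2 * (∫ ω, ‖Ahat k ω‖ ∂μ) + 1 ≤ β ^ 2) :
    ∀ k, (Integrable (fun ω => uu Ahat k ω * uu Ahat k ω) μ ∧
          ∫ ω, uu Ahat k ω * uu Ahat k ω ∂μ ≤ D * β ^ (2 * k)) ∧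
         (Integrable (fun ω => uu Ahat (k+1) ω * uu Ahat (k+1) ω) μ ∧
          ∫ ω, uu Ahat (k+1) ω * uu Ahat (k+1) ω ∂μ ≤ D * β ^ (2 * (k+1))) ∧
         (Integrable (fun ω => uu Ahat (k+1) ω * uu Ahat k ω) μ ∧
          ∫ ω, uu Ahat (k+1) ω * uu Ahat k ω ∂μ ≤ D * β ^ (2 * k + 1)) := by
  have hβ0 : (0:ℝ) ≤ β := le_trans zero_le_one hβ
  have hD : (0:ℝ) ≤ (D:ℝ) := Nat.cast_nonneg D
  have hbnn : ∀ j, 0 ≤ ∫ ω, ‖Ahat j ω‖ ∂μ := fun j => integral_nonneg fun ω => norm_nonneg _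
  have hcnn : ∀ j, 0 ≤ ∫ ω, ‖Ahat j ω‖ ^ 2 ∂μ := fun j => integral_nonneg fun ω => sq_nonneg _
  have hbc : ∀ j, (∫ ω, ‖Ahat j ω‖ ∂μ) ^ 2 ≤ ∫ ω, ‖Ahat j ω‖ ^ 2 ∂μ := by
    intro j
    have hv := variance_nonneg (fun ω => ‖Ahat j ω‖) μ
    rw [variance_eq_sub (hL2 j)] at hv
    simp only [Pi.pow_apply] at hv
    linarith
  have hbint : ∀ j, Integrable (fun ω => ‖Ahat j ω‖) μ := fun j => (hL2 j).integrable one_le_two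
  have hcint : ∀ j, Integrable (fun ω => ‖Ahat j ω‖ ^ 2) μ := fun j => (hL2 j).integrable_sq
  have hb2 : ∀ j, 4 * (∫ ω, ‖Ahat j ω‖ ∂μ) ^ 2 + 2 * (∫ ω, ‖Ahat j ω‖ ∂μ) + 1 ≤ β ^ 2 :=
    fun j => by have := hα j; have := hbc j; linarith
  have huumeas : ∀ a b : ℕ, AEStronglyMeasurable (fun ω => uu Ahat a ω * uu Ahat b ω) μ :=
    fun a b => ((uu_measurable Ahat hmeas a).mul (uu_measurable Ahat hmeas b)).aestronglyMeasurable
  have huunn : ∀ a b : ℕ, ∀ ω, 0 ≤ uu Ahat a ω * uu Ahat b ω :=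
    fun a b ω => mul_nonneg (uu_nonneg _ _ _) (uu_nonneg _ _ _)
  -- base cases
  have hA0eq : (fun ω : Ω => uu Ahat 0 ω * uu Ahat 0 ω) = fun _ => (D:ℝ) := by
    funext ω
    show Real.sqrt D * Real.sqrt D = (D:ℝ)
    exact Real.mul_self_sqrt hD
  have hA0int : Integrable (fun ω => uu Ahat 0 ω * uu Ahat 0 ω) μ := by
    rw [hA0eq]; exact integrable_const _
  have hA0val : ∫ ω, uu Ahat 0 ω * uu Ahat 0 ω ∂μ ≤ D * β ^ (2 * 0) := by
    rw [hA0eq, integral_const]; simp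
  have hA1eq : (fun ω : Ω => uu Ahat 1 ω * uu Ahat 1 ω)
      = fun ω => (D:ℝ) * ‖Ahat 1 ω‖ ^ 2 := by
    funext ω
    show (Real.sqrt D * ‖Ahat 1 ω‖) * (Real.sqrt D * ‖Ahat 1 ω‖) = (D:ℝ) * ‖Ahat 1 ω‖ ^ 2
    rw [mul_mul_mul_comm, Real.mul_self_sqrt hD, ← pow_two]
  have hA1int : Integrable (fun ω => uu Ahat 1 ω * uu Ahat 1 ω) μ := by
    rw [hA1eq]; exact (hcint 1).const_mul _
  have hA1val : ∫ ω, uu Ahat 1 ω * uu Ahat 1 ω ∂μ ≤ D * β ^ (2 * 1) := by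
    rw [hA1eq, integral_const_mul]
    have hc1 : ∫ ω, ‖Ahat 1 ω‖ ^ 2 ∂μ ≤ β ^ 2 := by
      have := hα 1; have := hbnn 1; have := hcnn 1; have := sq_nonneg β; linarith
    have : (D:ℝ) * (∫ ω, ‖Ahat 1 ω‖ ^ 2 ∂μ) ≤ D * β ^ 2 :=
      mul_le_mul_of_nonneg_left hc1 hD
    simpa using this
  have hB0eq : (fun ω : Ω => uu Ahat 1 ω * uu Ahat 0 ω)
      = fun ω => (D:ℝ) * ‖Ahat 1 ω‖ := by
    funext ω
    show (Real.sqrt D * ‖Ahat 1 ω‖) * Real.sqrt D = (D:ℝ) * ‖Ahat 1 ω‖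
    rw [mul_right_comm, Real.mul_self_sqrt hD]
  have hB0int : Integrable (fun ω => uu Ahat 1 ω * uu Ahat 0 ω) μ := by
    rw [hB0eq]; exact (hbint 1).const_mul _
  have hB0val : ∫ ω, uu Ahat 1 ω * uu Ahat 0 ω ∂μ ≤ D * β ^ (2 * 0 + 1) := by
    rw [hB0eq, integral_const_mul]
    have hb1 : ∫ ω, ‖Ahat 1 ω‖ ∂μ ≤ β := key0 (hbnn 1) hβ (hb2 1)
    have : (D:ℝ) * (∫ ω, ‖Ahat 1 ω‖ ∂μ) ≤ D * β := mul_le_mul_of_nonneg_left hb1 hD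
    simpa using this
  intro k
  induction k with
  | zero => exact ⟨⟨hA0int, hA0val⟩, ⟨hA1int, hA1val⟩, hB0int, hB0val⟩
  | succ k ih =>
    obtain ⟨hAk, hAk1, hBk⟩ := ih
    refine ⟨hAk1, ?_, ?_⟩
    -- notation
    · -- A (k+2)
      have hexp : (fun ω => uu Ahat (k+2) ω * uu Ahat (k+2) ω)
          = fun ω => 4 * (‖Ahat (k+2) ω‖ ^ 2 * (uu Ahat (k+1) ω * uu Ahat (k+1) ω))
            + (4 * (‖Ahat (k+2) ω‖ * (uu Ahat (k+1) ω * uu Ahat k ω))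
              + uu Ahat k ω * uu Ahat k ω) := by
        funext ω
        have hu2 : uu Ahat (k+2) ω
            = 2 * ‖Ahat (k+2) ω‖ * uu Ahat (k+1) ω + uu Ahat k ω := by
          simp only [uu, uAux]
        rw [hu2]; ring
      have hind2 : IndepFun (fun ω => ‖Ahat (k+2) ω‖ ^ 2)
          (fun ω => uu Ahat (k+1) ω * uu Ahat (k+1) ω) μ :=
        indep_helper μ Ahat hmeas hindep k (k+1) (k+1) le_rfl le_rfl 2
      have hind1 : IndepFun (fun ω => ‖Ahat (k+2) ω‖)
          (fun ω => uu Ahat (k+1) ω * uu Ahat k ω) μ := by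
        have := indep_helper μ Ahat hmeas hindep k (k+1) k le_rfl (by omega) 1
        simpa only [pow_one] using this
      have hI2 : Integrable
          (fun ω => ‖Ahat (k+2) ω‖ ^ 2 * (uu Ahat (k+1) ω * uu Ahat (k+1) ω)) μ :=
        hind2.integrable_mul (hcint (k+2)) hAk1.1
      have hI1 : Integrable
          (fun ω => ‖Ahat (k+2) ω‖ * (uu Ahat (k+1) ω * uu Ahat k ω)) μ :=
        hind1.integrable_mul (hbint (k+2)) hBk.1
      have hI4a : Integrable
          (fun ω => 4 * (‖Ahat (k+2) ω‖ ^ 2 * (uu Ahat (k+1) ω * uu Ahat (k+1) ω))) μ :=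
        hI2.const_mul 4
      have hI4b : Integrable
          (fun ω => 4 * (‖Ahat (k+2) ω‖ * (uu Ahat (k+1) ω * uu Ahat k ω))) μ :=
        hI1.const_mul 4
      have hI4c : Integrable
          (fun ω => 4 * (‖Ahat (k+2) ω‖ * (uu Ahat (k+1) ω * uu Ahat k ω))
            + uu Ahat k ω * uu Ahat k ω) μ := hI4b.add hAk.1
      have hIA : Integrable (fun ω => uu Ahat (k+2) ω * uu Ahat (k+2) ω) μ := by
        rw [hexp]
        exact hI4a.add hI4c
      refine ⟨hIA, ?_⟩
      have e2 : ∫ ω, ‖Ahat (k+2) ω‖ ^ 2 * (uu Ahat (k+1) ω * uu Ahat (k+1) ω) ∂μ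
          = (∫ ω, ‖Ahat (k+2) ω‖ ^ 2 ∂μ) * ∫ ω, uu Ahat (k+1) ω * uu Ahat (k+1) ω ∂μ :=
        hind2.integral_fun_mul_eq_mul_integral (((hmeas (k+2)).norm.pow_const 2).aestronglyMeasurable)
          (huumeas (k+1) (k+1))
      have e1 : ∫ ω, ‖Ahat (k+2) ω‖ * (uu Ahat (k+1) ω * uu Ahat k ω) ∂μ
          = (∫ ω, ‖Ahat (k+2) ω‖ ∂μ) * ∫ ω, uu Ahat (k+1) ω * uu Ahat k ω ∂μ :=
        hind1.integral_fun_mul_eq_mul_integral ((hmeas (k+2)).norm.aestronglyMeasurable)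
          (huumeas (k+1) k)
      have hval : ∫ ω, uu Ahat (k+2) ω * uu Ahat (k+2) ω ∂μ
          = 4 * ((∫ ω, ‖Ahat (k+2) ω‖ ^ 2 ∂μ) * ∫ ω, uu Ahat (k+1) ω * uu Ahat (k+1) ω ∂μ)
            + (4 * ((∫ ω, ‖Ahat (k+2) ω‖ ∂μ) * ∫ ω, uu Ahat (k+1) ω * uu Ahat k ω ∂μ)
              + ∫ ω, uu Ahat k ω * uu Ahat k ω ∂μ) := by
        rw [hexp, integral_add hI4a hI4c, integral_add hI4b hAk.1,
          integral_const_mul, integral_const_mul, e2, e1]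
      rw [hval]
      have hkey2 : 4 * (∫ ω, ‖Ahat (k+2) ω‖ ^ 2 ∂μ) * β ^ 2
          + 4 * (∫ ω, ‖Ahat (k+2) ω‖ ∂μ) * β + 1 ≤ β ^ 4 :=
        key2 (hbnn (k+2)) (hcnn (k+2)) (hbc (k+2)) hβ (hα (k+2))
      have hV1 := hAk1.2
      have hW := hBk.2
      have hV0 := hAk.2
      have hV1nn : 0 ≤ ∫ ω, uu Ahat (k+1) ω * uu Ahat (k+1) ω ∂μ :=
        integral_nonneg (huunn _ _)
      have hWnn : 0 ≤ ∫ ω, uu Ahat (k+1) ω * uu Ahat k ω ∂μ :=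
        integral_nonneg (huunn _ _)
      have hp1 : β ^ (2 * (k+1)) = β ^ (2 * k) * β ^ 2 := pow_add β (2*k) 2
      have hp2 : β ^ (2 * k + 1) = β ^ (2 * k) * β := pow_succ β (2*k)
      have hp4 : β ^ (2 * (k+2)) = β ^ (2 * k) * β ^ 4 := pow_add β (2*k) 4
      have ht : (0:ℝ) ≤ β ^ (2 * k) := pow_nonneg hβ0 _
      have m1 : (∫ ω, ‖Ahat (k+2) ω‖ ^ 2 ∂μ) * (∫ ω, uu Ahat (k+1) ω * uu Ahat (k+1) ω ∂μ)
          ≤ (∫ ω, ‖Ahat (k+2) ω‖ ^ 2 ∂μ) * (D * β ^ (2 * (k+1))) :=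
        mul_le_mul_of_nonneg_left hV1 (hcnn (k+2))
      have m2 : (∫ ω, ‖Ahat (k+2) ω‖ ∂μ) * (∫ ω, uu Ahat (k+1) ω * uu Ahat k ω ∂μ)
          ≤ (∫ ω, ‖Ahat (k+2) ω‖ ∂μ) * (D * β ^ (2 * k + 1)) :=
        mul_le_mul_of_nonneg_left hW (hbnn (k+2))
      rw [hp4]
      have hfin := mul_le_mul_of_nonneg_left hkey2 (mul_nonneg hD ht)
      rw [hp1] at m1
      rw [hp2] at m2
      nlinarith [m1, m2, hV0, hfin]
    · -- B (k+1)
      have hexp : (fun ω => uu Ahat (k+2) ω * uu Ahat (k+1) ω)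
          = fun ω => 2 * (‖Ahat (k+2) ω‖ * (uu Ahat (k+1) ω * uu Ahat (k+1) ω))
            + uu Ahat (k+1) ω * uu Ahat k ω := by
        funext ω
        have hu2 : uu Ahat (k+2) ω
            = 2 * ‖Ahat (k+2) ω‖ * uu Ahat (k+1) ω + uu Ahat k ω := by
          simp only [uu, uAux]
        rw [hu2]; ring
      have hind1 : IndepFun (fun ω => ‖Ahat (k+2) ω‖)
          (fun ω => uu Ahat (k+1) ω * uu Ahat (k+1) ω) μ := by
        have := indep_helper μ Ahat hmeas hindep k (k+1) (k+1) le_rfl le_rfl 1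
        simpa only [pow_one] using this
      have hI1 : Integrable
          (fun ω => ‖Ahat (k+2) ω‖ * (uu Ahat (k+1) ω * uu Ahat (k+1) ω)) μ :=
        hind1.integrable_mul (hbint (k+2)) hAk1.1
      have hI2a : Integrable
          (fun ω => 2 * (‖Ahat (k+2) ω‖ * (uu Ahat (k+1) ω * uu Ahat (k+1) ω))) μ :=
        hI1.const_mul 2
      have hIB : Integrable (fun ω => uu Ahat (k+2) ω * uu Ahat (k+1) ω) μ := by
        rw [hexp]
        exact hI2a.add hBk.1
      refine ⟨hIB, ?_⟩
      have e1 : ∫ ω, ‖Ahat (k+2) ω‖ * (uu Ahat (k+1) ω * uu Ahat (k+1) ω) ∂μ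
          = (∫ ω, ‖Ahat (k+2) ω‖ ∂μ) * ∫ ω, uu Ahat (k+1) ω * uu Ahat (k+1) ω ∂μ :=
        hind1.integral_fun_mul_eq_mul_integral ((hmeas (k+2)).norm.aestronglyMeasurable) (huumeas (k+1) (k+1))
      have hval : ∫ ω, uu Ahat (k+2) ω * uu Ahat (k+1) ω ∂μ
          = 2 * ((∫ ω, ‖Ahat (k+2) ω‖ ∂μ) * ∫ ω, uu Ahat (k+1) ω * uu Ahat (k+1) ω ∂μ)
            + ∫ ω, uu Ahat (k+1) ω * uu Ahat k ω ∂μ := by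
        rw [hexp, integral_add hI2a hBk.1, integral_const_mul, e1]
      rw [hval]
      have hkey1 : 2 * (∫ ω, ‖Ahat (k+2) ω‖ ∂μ) * β + 1 ≤ β ^ 2 :=
        key1 (hbnn (k+2)) hβ (hb2 (k+2))
      have hV1 := hAk1.2
      have hW := hBk.2
      have hp1 : β ^ (2 * (k+1)) = β ^ (2 * k + 1) * β := pow_succ β (2*k+1)
      have hp3 : β ^ (2 * (k+1) + 1) = β ^ (2 * k + 1) * β ^ 2 := pow_add β (2*k+1) 2
      have ht : (0:ℝ) ≤ β ^ (2 * k + 1) := pow_nonneg hβ0 _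
      have m1 : (∫ ω, ‖Ahat (k+2) ω‖ ∂μ) * (∫ ω, uu Ahat (k+1) ω * uu Ahat (k+1) ω ∂μ)
          ≤ (∫ ω, ‖Ahat (k+2) ω‖ ∂μ) * (D * β ^ (2 * (k+1))) :=
        mul_le_mul_of_nonneg_left hV1 (hbnn (k+2))
      rw [hp3]
      rw [hp1] at m1
      have hfin := mul_le_mul_of_nonneg_left hkey1 (mul_nonneg hD ht)
      nlinarith [m1, hW, hfin]

lemma frobSq_moment (μ : Measure Ω) [IsProbabilityMeasure μ]
    (Ahat : ℕ → Ω → Matrix (Fin D) (Fin D) ℝ)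
    (hmeas : ∀ k, Measurable (Ahat k))
    (hindep : iIndepFun Ahat μ)
    (hL2 : ∀ k, MemLp (fun ω => ‖Ahat k ω‖) 2 μ)
    (β : ℝ) (hβ : 1 ≤ β)
    (hα : ∀ k, 4 * (∫ ω, ‖Ahat k ω‖ ^ 2 ∂μ) + 2 * (∫ ω, ‖Ahat k ω‖ ∂μ) + 1 ≤ β ^ 2)
    (k : ℕ) :
    ∫ ω, frobSq (randChebT Ahat k ω) ∂μ ≤ D * β ^ (2 * k) := by
  have hk := (moment_bound μ Ahat hmeas hindep hL2 β hβ hα k).1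
  refine le_trans (integral_mono_of_nonneg (Filter.Eventually.of_forall fun ω => frobSq_nonneg _)
    hk.1 (Filter.Eventually.of_forall fun ω => ?_)) hk.2
  have h1 : fn (randChebT Ahat k ω) ≤ uu Ahat k ω := randChebT_fn_le Ahat ω k
  have h2 := fn_nonneg (randChebT Ahat k ω)
  have h3 := uu_nonneg Ahat k ω
  have h4 : fn (randChebT Ahat k ω) ^ 2 ≤ uu Ahat k ω * uu Ahat k ω := by
    nlinarith [mul_le_mul h1 h1 h2 h3]
  calc frobSq (randChebT Ahat k ω) = fn (randChebT Ahat k ω) ^ 2 := (fn_sq _).symm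
    _ ≤ uu Ahat k ω * uu Ahat k ω := h4

end Aux


set_option maxHeartbeats 1000000 in
/-- Bound on the expected squared Frobenius norm of the importance-sampled randomized
Chebyshev estimator of the von Mises kernel:
`E[‖(γ_k/q_k) T̂_k‖_F²] ≤ (D e^κ/(π² I_0(κ))) (1 + (2e^κ/I_0(κ))(e^{ακ/2} − 1))`,
where the expectation is over `k ~ q` and the randomness of `T̂_k`. -/
theorem vonMises_importance_sampler_bound {D : ℕ} {Ω : Type*} [MeasurableSpace Ω]
    (μ : Measure Ω) [IsProbabilityMeasure μ]
    (A : Matrix (Fin D) (Fin D) ℝ) (hAsymm : A.IsSymm)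
    (Ahat : ℕ → Ω → Matrix (Fin D) (Fin D) ℝ)
    (hmeas : ∀ k, Measurable (Ahat k))
    (hindep : iIndepFun Ahat μ)
    (hL2 : ∀ k, MemLp (fun ω => ‖Ahat k ω‖) 2 μ)
    (hunbiased : ∀ k, matExp μ (Ahat k) = A)
    (α : ℝ)
    (hα : ∀ k, 4 * (∫ ω, ‖Ahat k ω‖ ^ 2 ∂μ) + 2 * (∫ ω, ‖Ahat k ω‖ ∂μ) + 1 ≤ α)
    (κ lam' : ℝ) (hκ : 0 < κ) (hlam : lam' ∈ Set.Ioo (-1 : ℝ) 1)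
    (γ q : ℕ → ℝ) (Zc : ℝ)
    (hγ0 : γ 0 = 1 / π)
    (hγ : ∀ k : ℕ, 1 ≤ k →
      γ k = 2 / π * (besselI k κ / besselI 0 κ) * Real.cos (k * Real.arccos lam'))
    (hZc : Zc = 1 + 2 / besselI 0 κ *
      ∑' k : ℕ, besselI (k + 1) κ * |Real.cos ((k + 1 : ℕ) * Real.arccos lam')|)
    (hq0 : q 0 = 1 / Zc)
    (hq : ∀ k : ℕ, 1 ≤ k →
      q k = 2 / Zc * (besselI k κ / besselI 0 κ) * |Real.cos (k * Real.arccos lam')|) :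
    ∑' k : ℕ, (γ k) ^ 2 / q k * (∫ ω, frobSq (randChebT Ahat k ω) ∂μ) ≤
      D * Real.exp κ / (π ^ 2 * besselI 0 κ) *
        (1 + 2 * Real.exp κ / besselI 0 κ * (Real.exp (α * κ / 2) - 1)) := by
  have hκ0 : (0:ℝ) ≤ κ := hκ.le
  have hI0 : (1:ℝ) ≤ besselI 0 κ := Aux.one_le_besselI_zero hκ0
  have hI0pos : (0:ℝ) < besselI 0 κ := lt_of_lt_of_le one_pos hI0
  have hπ : (0:ℝ) < π := Real.pi_pos
  have hD : (0:ℝ) ≤ (D:ℝ) := Nat.cast_nonneg D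
  -- α ≥ 1
  have hα1 : (1:ℝ) ≤ α := by
    have h0 := hα 0
    have hb := integral_nonneg (μ := μ) (f := fun ω => ‖Ahat 0 ω‖) (fun ω => norm_nonneg (Ahat 0 ω))
    have hc := integral_nonneg (μ := μ) (f := fun ω => ‖Ahat 0 ω‖ ^ 2) (fun ω => sq_nonneg ‖Ahat 0 ω‖)
    linarith
  have hα0 : (0:ℝ) ≤ α := by linarith
  set β : ℝ := Real.sqrt α with hβdef
  have hβsq : β ^ 2 = α := Real.sq_sqrt hα0
  have hβ1 : (1:ℝ) ≤ β := by
    rw [hβdef, show (1:ℝ) = Real.sqrt 1 from (Real.sqrt_one).symm]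
    exact Real.sqrt_le_sqrt hα1
  -- moment bound
  have hak : ∀ k, ∫ ω, frobSq (randChebT Ahat k ω) ∂μ ≤ D * α ^ k := by
    intro k
    have := Aux.frobSq_moment μ Ahat hmeas hindep hL2 β hβ1
      (fun j => by rw [hβsq]; exact hα j) k
    rwa [pow_mul, hβsq] at this
  have haknn : ∀ k, 0 ≤ ∫ ω, frobSq (randChebT Ahat k ω) ∂μ :=
    fun k => integral_nonneg fun ω => Aux.frobSq_nonneg _
  -- bessel facts
  have hInn : ∀ k, 0 ≤ besselI k κ := Aux.besselI_nonneg hκ0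
  have hIpos : ∀ k, 0 < besselI k κ := Aux.besselI_pos hκ
  have hcos1 : ∀ x : ℝ, |Real.cos x| ≤ 1 := fun x => Real.abs_cos_le_one x
  have hIsum : Summable (fun k : ℕ => besselI (k+1) κ) := by
    refine Summable.of_nonneg_of_le (fun k => hInn _) (fun k => Aux.besselI_le hκ0 (k+1)) ?_
    have h1 : Summable (fun n : ℕ => (κ/2) ^ n / (n.factorial : ℝ)) :=
      Real.summable_pow_div_factorial _
    exact ((h1.comp_injective (add_left_injective 1)).mul_right (Real.exp κ))
  have hIcsum : Summable (fun k : ℕ =>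
      besselI (k+1) κ * |Real.cos ((k + 1 : ℕ) * Real.arccos lam')|) := by
    refine Summable.of_nonneg_of_le
      (fun k => mul_nonneg (hInn _) (abs_nonneg _))
      (fun k => mul_le_of_le_one_right (hInn _) (hcos1 _)) hIsum
  have hSnn : 0 ≤ ∑' k : ℕ, besselI (k + 1) κ * |Real.cos ((k + 1 : ℕ) * Real.arccos lam')| :=
    tsum_nonneg fun k => mul_nonneg (hInn _) (abs_nonneg _)
  have hZpos : 0 < Zc := by
    rw [hZc]
    have h2 : 0 ≤ 2 / besselI 0 κ := by positivity
    nlinarith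
  have hZle : Zc ≤ Real.exp κ / besselI 0 κ := by
    rw [hZc, le_div_iff₀ hI0pos]
    have h1 : ∑' k : ℕ, besselI (k + 1) κ * |Real.cos ((k + 1 : ℕ) * Real.arccos lam')|
        ≤ ∑' k : ℕ, besselI (k+1) κ :=
      Summable.tsum_le_tsum (fun k => mul_le_of_le_one_right (hInn _) (hcos1 _)) hIcsum hIsum
    have h2 := Aux.besselI_partition hκ0
    have h3 : (1 + 2 / besselI 0 κ *
        ∑' k : ℕ, besselI (k + 1) κ * |Real.cos ((k + 1 : ℕ) * Real.arccos lam')|)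
          * besselI 0 κ
        = besselI 0 κ + 2 * ∑' k : ℕ,
            besselI (k + 1) κ * |Real.cos ((k + 1 : ℕ) * Real.arccos lam')| := by
      generalize ∑' k : ℕ, besselI (k + 1) κ * |Real.cos ((k + 1 : ℕ) * Real.arccos lam')| = S
      rw [add_mul, one_mul, mul_comm (2 / besselI 0 κ) S, mul_assoc,
        div_mul_cancel₀ 2 hI0pos.ne', mul_comm S 2]
    rw [h3]
    linarith
  -- the majorant
  set m : ℕ → ℝ := fun k => match k with
    | 0 => Zc / π ^ 2 * D
    | (n+1) => Zc / π ^ 2 * D * (2 * (besselI (n+1) κ / besselI 0 κ)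
        * |Real.cos ((n + 1 : ℕ) * Real.arccos lam')| * α ^ (n+1)) with hm
  have hZπ : 0 ≤ Zc / π ^ 2 * D :=
    mul_nonneg (div_nonneg hZpos.le (sq_nonneg π)) hD
  have hmnn : ∀ k, 0 ≤ m k := by
    intro k
    match k with
    | 0 => exact hZπ
    | (n+1) =>
      have : 0 ≤ 2 * (besselI (n+1) κ / besselI 0 κ)
          * |Real.cos ((n + 1 : ℕ) * Real.arccos lam')| * α ^ (n+1) :=
        mul_nonneg (mul_nonneg (mul_nonneg (by norm_num)
          (div_nonneg (hInn _) hI0pos.le)) (abs_nonneg _)) (pow_nonneg hα0 _)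
      exact mul_nonneg hZπ this
  -- termwise bound
  have hterm : ∀ k, γ k ^ 2 / q k * (∫ ω, frobSq (randChebT Ahat k ω) ∂μ) ≤ m k := by
    intro k
    match k with
    | 0 =>
      have hq0' : γ 0 ^ 2 / q 0 = Zc / π ^ 2 := by
        rw [hγ0, hq0]
        field_simp
      rw [hq0']
      have := hak 0
      rw [pow_zero, mul_one] at this
      calc Zc / π ^ 2 * (∫ ω, frobSq (randChebT Ahat 0 ω) ∂μ)
          ≤ Zc / π ^ 2 * D := mul_le_mul_of_nonneg_left this (by positivity)
        _ = m 0 := rfl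
    | (n+1) =>
      by_cases hc : Real.cos ((n + 1 : ℕ) * Real.arccos lam') = 0
      · have hγz : γ (n+1) = 0 := by rw [hγ (n+1) (by omega), hc, mul_zero]
        rw [hγz]
        simpa using hmnn (n+1)
      · have hqpos : 0 < q (n+1) := by
          rw [hq (n+1) (by omega)]
          have h1 : 0 < 2 / Zc := div_pos (by norm_num) hZpos
          have h2 : 0 < besselI (n+1) κ / besselI 0 κ := div_pos (hIpos _) hI0pos
          have h3 : 0 < |Real.cos ((n + 1 : ℕ) * Real.arccos lam')| := abs_pos.mpr hc
          exact mul_pos (mul_pos h1 h2) h3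
        have hkey : γ (n+1) ^ 2 / q (n+1)
            = Zc / π ^ 2 * (2 * (besselI (n+1) κ / besselI 0 κ)
              * |Real.cos ((n + 1 : ℕ) * Real.arccos lam')|) := by
          rw [div_eq_iff (ne_of_gt hqpos), hγ (n+1) (by omega), hq (n+1) (by omega),
            mul_pow, mul_pow,
            show Real.cos ((n + 1 : ℕ) * Real.arccos lam') ^ 2
              = |Real.cos ((n + 1 : ℕ) * Real.arccos lam')| ^ 2 from (sq_abs _).symm]
          field_simp
        have hcoef : 0 ≤ Zc / π ^ 2 * (2 * (besselI (n+1) κ / besselI 0 κ)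
            * |Real.cos ((n + 1 : ℕ) * Real.arccos lam')|) :=
          mul_nonneg (div_nonneg hZpos.le (sq_nonneg π)) (mul_nonneg (mul_nonneg (by norm_num)
            (div_nonneg (hInn _) hI0pos.le)) (abs_nonneg _))
        rw [hkey]
        calc Zc / π ^ 2 * (2 * (besselI (n+1) κ / besselI 0 κ)
              * |Real.cos ((n + 1 : ℕ) * Real.arccos lam')|)
              * (∫ ω, frobSq (randChebT Ahat (n+1) ω) ∂μ)
            ≤ Zc / π ^ 2 * (2 * (besselI (n+1) κ / besselI 0 κ)
              * |Real.cos ((n + 1 : ℕ) * Real.arccos lam')|) * (D * α ^ (n+1)) :=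
              mul_le_mul_of_nonneg_left (hak (n+1)) hcoef
          _ = m (n+1) := by show _ = Zc / π ^ 2 * D * _; ring
  have htermnn : ∀ k, 0 ≤ γ k ^ 2 / q k * (∫ ω, frobSq (randChebT Ahat k ω) ∂μ) := by
    intro k
    apply mul_nonneg _ (haknn k)
    apply div_nonneg (sq_nonneg _)
    match k with
    | 0 =>
      rw [hq0]
      exact le_of_lt (div_pos one_pos hZpos)
    | (n+1) =>
      rw [hq (n+1) (by omega)]
      exact mul_nonneg (mul_nonneg (div_nonneg (by norm_num) hZpos.le)
        (div_nonneg (hInn _) hI0pos.le)) (abs_nonneg _)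
  -- summability of the majorant
  have hMsum : Summable (fun n : ℕ => Zc / π ^ 2 * D * (2 * (Real.exp κ / besselI 0 κ)
      * ((α * κ / 2) ^ (n+1) / ((n+1).factorial : ℝ)))) := by
    have h1 : Summable (fun n : ℕ => (α * κ / 2) ^ n / (n.factorial : ℝ)) :=
      Real.summable_pow_div_factorial _
    exact ((h1.comp_injective (add_left_injective 1)).mul_left _).mul_left _
  have hmle : ∀ n : ℕ, m (n+1) ≤ Zc / π ^ 2 * D * (2 * (Real.exp κ / besselI 0 κ)
      * ((α * κ / 2) ^ (n+1) / ((n+1).factorial : ℝ))) := by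
    intro n
    have hIle := Aux.besselI_le hκ0 (n+1)
    have hstep : 2 * (besselI (n+1) κ / besselI 0 κ)
        * |Real.cos ((n + 1 : ℕ) * Real.arccos lam')| * α ^ (n+1)
        ≤ 2 * (Real.exp κ / besselI 0 κ) * ((α * κ / 2) ^ (n+1) / ((n+1).factorial : ℝ)) := by
      have habs := hcos1 ((n + 1 : ℕ) * Real.arccos lam')
      have habs0 := abs_nonneg (Real.cos ((n + 1 : ℕ) * Real.arccos lam'))
      have hαpow : (0:ℝ) ≤ α ^ (n+1) := pow_nonneg hα0 _
      have h1 : 2 * (besselI (n+1) κ / besselI 0 κ)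
          * |Real.cos ((n + 1 : ℕ) * Real.arccos lam')| * α ^ (n+1)
          ≤ 2 * (besselI (n+1) κ / besselI 0 κ) * 1 * α ^ (n+1) := by
        have h2 : 0 ≤ 2 * (besselI (n+1) κ / besselI 0 κ) :=
          mul_nonneg (by norm_num) (div_nonneg (hInn _) hI0pos.le)
        have := mul_le_mul_of_nonneg_left habs h2
        exact mul_le_mul_of_nonneg_right this hαpow
      have h3 : 2 * (besselI (n+1) κ / besselI 0 κ) * 1 * α ^ (n+1)
          ≤ 2 * (((κ/2) ^ (n+1) / ((n+1).factorial : ℝ) * Real.exp κ) / besselI 0 κ)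
            * 1 * α ^ (n+1) := by
        have h4 : besselI (n+1) κ / besselI 0 κ
            ≤ ((κ/2) ^ (n+1) / ((n+1).factorial : ℝ) * Real.exp κ) / besselI 0 κ :=
          (div_le_div_iff_of_pos_right hI0pos).mpr hIle
        nlinarith [h4, hαpow]
      have h5 : 2 * (((κ/2) ^ (n+1) / ((n+1).factorial : ℝ) * Real.exp κ) / besselI 0 κ)
            * 1 * α ^ (n+1)
          = 2 * (Real.exp κ / besselI 0 κ)
            * ((α * κ / 2) ^ (n+1) / ((n+1).factorial : ℝ)) := by
        rw [show α * κ / 2 = α * (κ / 2) by ring, mul_pow]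
        field_simp
      linarith
    exact mul_le_mul_of_nonneg_left hstep hZπ
  have hmsum : Summable m := by
    rw [← summable_nat_add_iff 1]
    exact Summable.of_nonneg_of_le (fun n => hmnn (n+1)) hmle hMsum
  have htsum : Summable (fun k => γ k ^ 2 / q k * (∫ ω, frobSq (randChebT Ahat k ω) ∂μ)) :=
    Summable.of_nonneg_of_le htermnn hterm hmsum
  -- exp series
  have hexpsum : ∑' n : ℕ, (α * κ / 2) ^ (n+1) / ((n+1).factorial : ℝ)
      = Real.exp (α * κ / 2) - 1 := by
    have h1 := Aux.ef_tsum (α * κ)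
    have h2 := Summable.tsum_eq_zero_add (Aux.ef_summable (α * κ))
    have h3 : Aux.ef (α * κ) 0 = 1 := by simp [Aux.ef]
    rw [h2, h3] at h1
    have h4 : ∀ n : ℕ, Aux.ef (α * κ) (n+1) = (α * κ / 2) ^ (n+1) / ((n+1).factorial : ℝ) :=
      fun n => rfl
    simp only [h4] at h1
    linarith
  -- putting it together
  have hbnd : ∑' k, γ k ^ 2 / q k * (∫ ω, frobSq (randChebT Ahat k ω) ∂μ) ≤ ∑' k, m k :=
    Summable.tsum_le_tsum hterm htsum hmsum
  have hm0 : ∑' k, m k = m 0 + ∑' n, m (n+1) := Summable.tsum_eq_zero_add hmsum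
  have hmtail : ∑' n, m (n+1) ≤ Zc / π ^ 2 * D
      * (2 * (Real.exp κ / besselI 0 κ) * (Real.exp (α * κ / 2) - 1)) := by
    have h1 : ∑' n, m (n+1) ≤ ∑' n : ℕ, Zc / π ^ 2 * D * (2 * (Real.exp κ / besselI 0 κ)
        * ((α * κ / 2) ^ (n+1) / ((n+1).factorial : ℝ))) :=
      Summable.tsum_le_tsum hmle ((summable_nat_add_iff 1).mpr hmsum) hMsum
    have h2 : ∑' n : ℕ, Zc / π ^ 2 * D * (2 * (Real.exp κ / besselI 0 κ)
        * ((α * κ / 2) ^ (n+1) / ((n+1).factorial : ℝ)))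
        = Zc / π ^ 2 * D * (2 * (Real.exp κ / besselI 0 κ) * (Real.exp (α * κ / 2) - 1)) := by
      rw [tsum_mul_left, tsum_mul_left, hexpsum]
    linarith
  have hbr : (0:ℝ) ≤ 1 + 2 * Real.exp κ / besselI 0 κ * (Real.exp (α * κ / 2) - 1) := by
    have h1 : (1:ℝ) ≤ Real.exp (α * κ / 2) := by
      rw [show (1:ℝ) = Real.exp 0 from (Real.exp_zero).symm]
      exact Real.exp_le_exp.mpr (div_nonneg (mul_nonneg hα0 hκ0) (by norm_num))
    have h2 : 0 ≤ 2 * Real.exp κ / besselI 0 κ :=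
      div_nonneg (by positivity) hI0pos.le
    nlinarith
  calc ∑' k, γ k ^ 2 / q k * (∫ ω, frobSq (randChebT Ahat k ω) ∂μ)
      ≤ ∑' k, m k := hbnd
    _ ≤ Zc / π ^ 2 * D * (1 + 2 * Real.exp κ / besselI 0 κ * (Real.exp (α * κ / 2) - 1)) := by
        rw [hm0]
        have : m 0 = Zc / π ^ 2 * D := rfl
        rw [this]
        have h6 : Zc / π ^ 2 * D * (2 * (Real.exp κ / besselI 0 κ) * (Real.exp (α * κ / 2) - 1))
            = Zc / π ^ 2 * D * (2 * Real.exp κ / besselI 0 κ * (Real.exp (α * κ / 2) - 1)) := by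
          ring
        nlinarith [hmtail, h6]
    _ ≤ Real.exp κ / besselI 0 κ / π ^ 2 * D
        * (1 + 2 * Real.exp κ / besselI 0 κ * (Real.exp (α * κ / 2) - 1)) := by
        apply mul_le_mul_of_nonneg_right _ hbr
        have h7 : Zc / π ^ 2 ≤ Real.exp κ / besselI 0 κ / π ^ 2 :=
          (div_le_div_iff_of_pos_right (by positivity)).mpr hZle
        exact mul_le_mul_of_nonneg_right h7 hD
    _ = D * Real.exp κ / (π ^ 2 * besselI 0 κ)
        * (1 + 2 * Real.exp κ / besselI 0 κ * (Real.exp (α * κ / 2) - 1)) := by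
        ring
end
end

section
/- For 0 < φ < 1, the shifted/scaled Marchenko–Pastur density ψ̃(λ) = (2/π) · √(1−λ²) / (1 + 2λ√φ + φ) on [−1,1] has Chebyshev expansion integrals ∫_{−1}^1 T_k(λ) ψ̃(λ) dλ equal to 1 for k = 0, −√φ/2 for k = 1, and −(1/2)(1−φ)(−√φ)^{k−2} for k ≥ 2. -/
noncomputable section

open Real Set intervalIntegral


def chebT : ℕ → ℝ → ℝ
  | 0, _ => 1
  | 1, x => x
  | (k + 2), x => 2 * x * chebT (k + 1) x - chebT k x

lemma chebT_cont : ∀ k : ℕ, Continuous (chebT k) := by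
  have h : ∀ k : ℕ, Continuous (chebT k) ∧ Continuous (chebT (k+1)) := by
    intro k
    induction k with
    | zero => exact ⟨by simpa [chebT] using continuous_const, by simpa [chebT] using continuous_id'⟩
    | succ n ih =>
      refine ⟨ih.2, ?_⟩
      have : chebT (n+2) = fun x => 2 * x * chebT (n+1) x - chebT n x := rfl
      rw [this]
      exact (((continuous_const.mul continuous_id).mul ih.2)).sub ih.1
  exact fun k => (h k).1

lemma chebT_cos : ∀ (k : ℕ) (θ : ℝ), chebT k (Real.cos θ) = Real.cos (k * θ) := by
  have h : ∀ (k : ℕ) (θ : ℝ), chebT k (Real.cos θ) = Real.cos (k * θ) ∧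
      chebT (k+1) (Real.cos θ) = Real.cos ((k+1) * θ) := by
    intro k
    induction k with
    | zero => intro θ; constructor <;> simp [chebT]
    | succ n ih =>
      intro θ
      refine ⟨by push_cast; exact (ih θ).2, ?_⟩
      have h1 : chebT (n+2) (Real.cos θ) = 2 * Real.cos θ * chebT (n+1) (Real.cos θ)
          - chebT n (Real.cos θ) := rfl
      rw [h1, (ih θ).1, (ih θ).2]
      push_cast
      have e1 : ((n:ℝ)+1+1) * θ = ((n:ℝ)+1)*θ + θ := by ring
      have e2 : ((n:ℝ)) * θ = ((n:ℝ)+1)*θ - θ := by ring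
      rw [e2, Real.cos_sub, e1, Real.cos_add]
      ring
  intro k θ; exact (h k θ).1

lemma chebT_zero : ∀ x : ℝ, chebT 0 x = 1 := fun _ => rfl
lemma chebT_one : ∀ x : ℝ, chebT 1 x = x := fun _ => rfl
lemma chebT_two : ∀ (k : ℕ) (x : ℝ), chebT (k+2) x = 2 * x * chebT (k+1) x - chebT k x :=
  fun _ _ => rfl

lemma subst_cos {g : ℝ → ℝ} (hg : Continuous g) :
    ∫ x in (-1:ℝ)..1, g x = ∫ θ in (0:ℝ)..π, Real.sin θ * g (Real.cos θ) := by
  have h := intervalIntegral.integral_comp_smul_deriv (a := (0:ℝ)) (b := π)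
    (f := Real.cos) (f' := fun θ => -Real.sin θ) (g := g)
    (fun x _ => Real.hasDerivAt_cos x) (Real.continuous_sin.neg.continuousOn) hg
  simp only [Real.cos_zero, Real.cos_pi, smul_eq_mul, Function.comp] at h
  rw [show (∫ x in (-1:ℝ)..1, g x) = -∫ x in (1:ℝ)..(-1), g x by
      rw [intervalIntegral.integral_symm], ← h, ← intervalIntegral.integral_neg]
  congr 1; funext θ; ring

lemma int_cos_n (n : ℕ) (hn : n ≠ 0) : ∫ θ in (0:ℝ)..π, Real.cos (n * θ) = 0 := by
  have hc : (n:ℝ) ≠ 0 := Nat.cast_ne_zero.2 hn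
  rw [intervalIntegral.integral_comp_mul_left (fun x => Real.cos x) hc]
  simp [Real.sin_nat_mul_pi]

lemma hasDeriv_sin_mul (c θ : ℝ) :
    HasDerivAt (fun θ => Real.sin (c*θ)) (c * Real.cos (c*θ)) θ := by
  simpa [mul_comm, Function.comp_def] using ((Real.hasDerivAt_sin (c*θ)).comp θ ((hasDerivAt_id θ).const_mul c))

lemma J1 : ∫ θ in (0:ℝ)..π, Real.cos θ * Real.sin θ ^ 2 = 0 := by
  have h : ∀ θ ∈ Set.uIcc (0:ℝ) π, HasDerivAt (fun θ => Real.sin θ ^ 3 / 3)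
      (Real.cos θ * Real.sin θ ^ 2) θ := by
    intro θ _
    have := ((Real.hasDerivAt_sin θ).pow 3).div_const 3
    simpa [mul_comm, mul_assoc, mul_left_comm] using this
  rw [intervalIntegral.integral_eq_sub_of_hasDerivAt h
    (Continuous.intervalIntegrable (by continuity) _ _)]
  simp

lemma J2 : ∫ θ in (0:ℝ)..π, Real.cos (2*θ) * Real.sin θ ^ 2 = -(π/4) := by
  have h : ∀ θ ∈ Set.uIcc (0:ℝ) π, HasDerivAt
      (fun θ => Real.sin (2*θ) / 4 - Real.sin (4*θ) / 16 - θ / 4)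
      (Real.cos (2*θ) * Real.sin θ ^ 2) θ := by
    intro θ _
    have h1 := ((hasDeriv_sin_mul 2 θ).div_const 4).sub ((hasDeriv_sin_mul 4 θ).div_const 16)
    have h2 := h1.sub ((hasDerivAt_id θ).div_const 4)
    convert h2 using 1
    rfl
    rfl
    rfl
    have e4 : (4:ℝ)*θ = 2*θ + 2*θ := by ring
    rw [e4, Real.cos_add, Real.cos_two_mul, Real.sin_two_mul, Real.sin_sq]
    nlinarith [Real.sin_sq_add_cos_sq θ]
  rw [intervalIntegral.integral_eq_sub_of_hasDerivAt h
    (Continuous.intervalIntegrable (by continuity) _ _)]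
  have s2 : Real.sin (2*π) = 0 := Real.sin_two_pi
  have s4 : Real.sin (4*π) = 0 := by
    have h4 : (4:ℝ)*π = ((4:ℕ):ℝ)*π := by norm_num
    rw [h4, Real.sin_nat_mul_pi]
  rw [mul_zero, mul_zero, Real.sin_zero]
  rw [s2, s4]
  ring

lemma Jbig (j : ℕ) : ∫ θ in (0:ℝ)..π, Real.cos ((j+3:ℕ) * θ) * Real.sin θ ^ 2 = 0 := by
  have key : ∀ θ:ℝ, Real.cos ((j+3:ℕ)*θ) * Real.sin θ^2 =
      (1/2) * Real.cos ((j+3:ℕ)*θ) - (1/4)*Real.cos ((j+5:ℕ)*θ)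
        - (1/4)*Real.cos ((j+1:ℕ)*θ) := by
    intro θ
    push_cast
    have e1 : ((j:ℝ)+5)*θ = ((j:ℝ)+3)*θ + 2*θ := by ring
    have e2 : ((j:ℝ)+1)*θ = ((j:ℝ)+3)*θ - 2*θ := by ring
    rw [e1, e2, Real.cos_add, Real.cos_sub, Real.cos_two_mul, Real.sin_sq]
    ring
  simp_rw [key]
  have c1 : Continuous fun θ:ℝ => (1/2) * Real.cos ((j+3:ℕ)*θ) := by continuity
  have c2 : Continuous fun θ:ℝ => (1/4) * Real.cos ((j+5:ℕ)*θ) := by continuity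
  have c3 : Continuous fun θ:ℝ => (1/4) * Real.cos ((j+1:ℕ)*θ) := by continuity
  rw [intervalIntegral.integral_sub (((c1.intervalIntegrable _ _)).sub (c2.intervalIntegrable _ _))
      (c3.intervalIntegrable _ _),
    intervalIntegral.integral_sub (c1.intervalIntegrable _ _) (c2.intervalIntegrable _ _),
    intervalIntegral.integral_const_mul, intervalIntegral.integral_const_mul,
    intervalIntegral.integral_const_mul, int_cos_n _ (by omega), int_cos_n _ (by omega),
    int_cos_n _ (by omega)]
  ring

lemma sqrt_div_int (a : ℝ) (ha : a < -1) :
    ∫ x in (-1:ℝ)..1, Real.sqrt (1-x^2) / (x-a) = -π * (a + Real.sqrt (a^2-1)) := by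
  set r := Real.sqrt (a^2-1) with hr
  have hr2 : r^2 = a^2-1 := Real.sq_sqrt (by nlinarith)
  have hrpos : 0 < r := Real.sqrt_pos.2 (by nlinarith)
  set g : ℝ → ℝ := fun x => (1-a*x)/(a-x) with hg
  set F : ℝ → ℝ := fun x => Real.sqrt (1-x^2) - a * Real.arcsin x + r * Real.arcsin (g x)
    with hF
  have hax : ∀ x : ℝ, x ∈ Icc (-1:ℝ) 1 → a - x < 0 := fun x hx => by
    have := hx.1; linarith
  have hcont : ContinuousOn F (Icc (-1:ℝ) 1) := by
    apply ContinuousOn.add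
    apply ContinuousOn.sub
    · exact (Real.continuous_sqrt.comp (by continuity)).continuousOn
    · exact (continuous_const.mul Real.continuous_arcsin).continuousOn
    · refine continuous_const.continuousOn.mul
        (Real.continuous_arcsin.comp_continuousOn ?_)
      exact ContinuousOn.div (by fun_prop) (by fun_prop)
        (fun x hx => ne_of_lt (hax x hx))
  have hderiv : ∀ x ∈ Ioo (-1:ℝ) 1, HasDerivAt F (Real.sqrt (1-x^2)/(x-a)) x := by
    intro x hx
    have hx1 : (-1:ℝ) < x := hx.1
    have hx2 : x < 1 := hx.2
    have hxa : (0:ℝ) < x - a := by linarith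
    have h1x2 : (0:ℝ) < 1 - x^2 := by nlinarith
    set s := Real.sqrt (1-x^2) with hs
    have hs2 : s^2 = 1-x^2 := Real.sq_sqrt h1x2.le
    have hspos : 0 < s := Real.sqrt_pos.2 h1x2
    have d1 : HasDerivAt (fun x : ℝ => Real.sqrt (1-x^2)) (-x/s) x := by
      have hinner : HasDerivAt (fun x : ℝ => 1-x^2) (-(2*x)) x := by
        simpa using ((hasDerivAt_pow 2 x).const_sub 1)
      have := (Real.hasDerivAt_sqrt (ne_of_gt h1x2)).comp x hinner
      convert this using 1
      rfl
      rfl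
      rfl
      rw [← hs]
      field_simp
    have d2 : HasDerivAt (fun x : ℝ => a * Real.arcsin x) (a / s) x := by
      have := (Real.hasDerivAt_arcsin (ne_of_gt hx1) (ne_of_lt hx2)).const_mul a
      simpa [← hs, mul_one_div, div_eq_mul_inv] using this
    have dg : HasDerivAt g ((1-a^2)/(a-x)^2) x := by
      have hnum : HasDerivAt (fun x : ℝ => 1-a*x) (-a) x := by
        simpa using ((hasDerivAt_id x).const_mul a).const_sub 1
      have hden : HasDerivAt (fun x : ℝ => a-x) (-1) x := by
        simpa using (hasDerivAt_id x).const_sub a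
      have := hnum.div hden (by linarith : a - x ≠ 0)
      convert this using 1
      rfl
      rfl
      rfl
      field_simp
      ring
    have hane : a - x ≠ 0 := by linarith
    have hxane : x - a ≠ 0 := by linarith
    have hgeq : 1 - (g x)^2 = (a^2-1)*(1-x^2)/(a-x)^2 := by
      rw [hg]
      field_simp
      ring
    have hgsq : 1 - (g x)^2 = (r*s/(x-a))^2 := by
      rw [hgeq, div_pow, mul_pow, hr2, hs2, show (x-a)^2 = (a-x)^2 by ring]
    have hgpos : 0 < 1 - (g x)^2 := by
      rw [hgeq]
      apply div_pos (mul_pos (by nlinarith) h1x2) (by positivity)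
    have hgsqrt : Real.sqrt (1 - (g x)^2) = r*s/(x-a) := by
      rw [hgsq, Real.sqrt_sq (by positivity)]
    have hgne1 : g x ≠ 1 := by intro h; rw [h] at hgpos; norm_num at hgpos
    have hgnem1 : g x ≠ -1 := by intro h; rw [h] at hgpos; norm_num at hgpos
    have d3 : HasDerivAt (fun x : ℝ => r * Real.arcsin (g x))
        (r * (1 / Real.sqrt (1 - g x^2) * ((1-a^2)/(a-x)^2))) x :=
      (((Real.hasDerivAt_arcsin hgnem1 hgne1).comp x dg)).const_mul r
    have dF := (d1.sub d2).add d3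
    convert dF using 1
    rfl
    rfl
    rfl
    rw [hgsqrt]
    field_simp
    linear_combination ((a-x)^2) * hs2
  have hint : IntervalIntegrable (fun x => Real.sqrt (1-x^2)/(x-a)) MeasureTheory.volume
      (-1:ℝ) 1 := by
    apply ContinuousOn.intervalIntegrable
    rw [Set.uIcc_of_le (by norm_num : (-1:ℝ) ≤ 1)]
    exact ContinuousOn.div ((Real.continuous_sqrt.comp (by continuity)).continuousOn)
      (by fun_prop) (fun x hx => by have := hax x hx; intro h; apply absurd h; intro h'; linarith)
  rw [intervalIntegral.integral_eq_sub_of_hasDerivAt_of_le (by norm_num) hcont hderiv hint]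
  have e1 : g 1 = -1 := by
    rw [hg]; simp only []
    rw [div_eq_iff (by intro h; nlinarith : a - 1 ≠ 0)]
    ring
  have em1 : g (-1) = 1 := by
    rw [hg]; simp only []
    rw [div_eq_iff (by intro h; nlinarith : a - (-1) ≠ 0)]
    ring
  rw [hF]
  simp only [e1, em1]
  rw [Real.arcsin_one, Real.arcsin_neg_one]
  norm_num [Real.sqrt_zero]
  ring

lemma Jcheb (m : ℕ) : ∫ x in (-1:ℝ)..1, chebT m x * Real.sqrt (1-x^2)
    = ∫ θ in (0:ℝ)..π, Real.cos (m*θ) * Real.sin θ^2 := by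
  rw [subst_cos (g := fun x => chebT m x * Real.sqrt (1-x^2)) ((chebT_cont m).mul (by continuity))]
  apply intervalIntegral.integral_congr
  intro θ hθ
  rw [Set.uIcc_of_le Real.pi_nonneg] at hθ
  have hsin : 0 ≤ Real.sin θ := Real.sin_nonneg_of_nonneg_of_le_pi hθ.1 hθ.2
  simp only [chebT_cos]
  rw [show (1:ℝ) - Real.cos θ^2 = Real.sin θ^2 by rw [Real.sin_sq], Real.sqrt_sq hsin]
  ring

lemma Jcheb1 : ∫ x in (-1:ℝ)..1, chebT 1 x * Real.sqrt (1-x^2) = 0 := by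
  rw [Jcheb]; push_cast; simpa using J1

lemma Jcheb2 : ∫ x in (-1:ℝ)..1, chebT 2 x * Real.sqrt (1-x^2) = -(π/4) := by
  rw [Jcheb]; push_cast; exact J2

lemma Jcheb_big (m : ℕ) (hm : 3 ≤ m) :
    ∫ x in (-1:ℝ)..1, chebT m x * Real.sqrt (1-x^2) = 0 := by
  obtain ⟨j, rfl⟩ : ∃ j, m = j + 3 := ⟨m - 3, by omega⟩
  rw [Jcheb]; exact Jbig j

def mpInt (t : ℝ) (m : ℕ) : ℝ :=
  ∫ x in (-1:ℝ)..1, chebT m x * (2/π * Real.sqrt (1-x^2)/(1+2*x*t+t^2))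

lemma master0 (t : ℝ) (h0 : 0 < t) (h1 : t < 1) :
    ∫ x in (-1:ℝ)..1, Real.sqrt (1-x^2)/(1+2*x*t+t^2) = π/2 := by
  set a : ℝ := -(1+t^2)/(2*t) with ha
  have haneg : a < -1 := by
    rw [ha, div_lt_iff₀ (by linarith)]
    nlinarith
  have hsq : Real.sqrt (a^2-1) = (1-t^2)/(2*t) := by
    rw [show a^2-1 = ((1-t^2)/(2*t))^2 by rw [ha]; field_simp; ring,
      Real.sqrt_sq (by apply div_nonneg; nlinarith; linarith)]
  have key : ∀ x : ℝ, Real.sqrt (1-x^2)/(1+2*x*t+t^2)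
      = (2*t)⁻¹ * (Real.sqrt (1-x^2)/(x-a)) := by
    intro x
    rw [inv_mul_eq_div, div_div, show (x-a)*(2*t) = 1+2*x*t+t^2 by rw [ha]; field_simp; ring]
  simp_rw [key]
  rw [intervalIntegral.integral_const_mul, sqrt_div_int a haneg, hsq, ha]
  field_simp
  ring

lemma master1 (t : ℝ) (h0 : 0 < t) (h1 : t < 1) :
    ∫ x in (-1:ℝ)..1, x * Real.sqrt (1-x^2)/(1+2*x*t+t^2) = -(π*t)/4 := by
  set a : ℝ := -(1+t^2)/(2*t) with ha
  have haneg : a < -1 := by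
    rw [ha, div_lt_iff₀ (by linarith)]
    nlinarith
  have hsq : Real.sqrt (a^2-1) = (1-t^2)/(2*t) := by
    rw [show a^2-1 = ((1-t^2)/(2*t))^2 by rw [ha]; field_simp; ring,
      Real.sqrt_sq (by apply div_nonneg; nlinarith; linarith)]
  have key : Set.EqOn (fun x : ℝ => x * Real.sqrt (1-x^2)/(1+2*x*t+t^2))
      (fun x : ℝ => (2*t)⁻¹ * Real.sqrt (1-x^2) + ((2*t)⁻¹*a) * (Real.sqrt (1-x^2)/(x-a)))
      (Set.uIcc (-1:ℝ) 1) := by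
    intro x hx
    rw [Set.uIcc_of_le (by norm_num : (-1:ℝ) ≤ 1)] at hx
    have hxa : 0 < x - a := by have := hx.1; nlinarith [haneg]
    have hden : 1+2*x*t+t^2 = (2*t)*(x-a) := by rw [ha]; field_simp; ring
    simp only [hden]
    field_simp
    ring
  rw [intervalIntegral.integral_congr key]
  have c1 : Continuous fun x : ℝ => (2*t)⁻¹ * Real.sqrt (1-x^2) := by continuity
  have i2 : IntervalIntegrable (fun x : ℝ => ((2*t)⁻¹*a) * (Real.sqrt (1-x^2)/(x-a)))
      MeasureTheory.volume (-1:ℝ) 1 := by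
    apply ContinuousOn.intervalIntegrable
    rw [Set.uIcc_of_le (by norm_num : (-1:ℝ) ≤ 1)]
    apply ContinuousOn.mul continuousOn_const
    apply ContinuousOn.div ((Real.continuous_sqrt.comp (by continuity)).continuousOn)
      (by fun_prop)
    intro x hx
    have := hx.1
    have : a < x := lt_of_lt_of_le haneg hx.1
    intro h; rw [sub_eq_zero] at h; exact absurd h.symm (ne_of_lt this)
  rw [intervalIntegral.integral_add (c1.intervalIntegrable _ _) i2,
    intervalIntegral.integral_const_mul, intervalIntegral.integral_const_mul,
    integral_sqrt_one_sub_sq, sqrt_div_int a haneg, hsq, ha]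
  field_simp
  ring

lemma mpInt_cont (t : ℝ) (h0 : 0 < t) (h1 : t < 1) (m : ℕ) :
    ContinuousOn (fun x : ℝ => chebT m x * (2/π * Real.sqrt (1-x^2)/(1+2*x*t+t^2)))
      (Set.uIcc (-1:ℝ) 1) := by
  rw [Set.uIcc_of_le (by norm_num : (-1:ℝ) ≤ 1)]
  apply ContinuousOn.mul (chebT_cont m).continuousOn
  apply ContinuousOn.div (by fun_prop) (by fun_prop)
  intro x hx
  have h1' := hx.1
  have h2' := hx.2
  nlinarith

lemma mpInt_intg (t : ℝ) (h0 : 0 < t) (h1 : t < 1) (m : ℕ) :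
    IntervalIntegrable (fun x : ℝ => chebT m x * (2/π * Real.sqrt (1-x^2)/(1+2*x*t+t^2)))
      MeasureTheory.volume (-1:ℝ) 1 :=
  (mpInt_cont t h0 h1 m).intervalIntegrable

lemma mpInt0 (t : ℝ) (h0 : 0 < t) (h1 : t < 1) : mpInt t 0 = 1 := by
  rw [mpInt]
  have key : ∀ x : ℝ, chebT 0 x * (2/π * Real.sqrt (1-x^2)/(1+2*x*t+t^2))
      = (2/π) * (Real.sqrt (1-x^2)/(1+2*x*t+t^2)) := by
    intro x; rw [chebT_zero]; ring
  simp_rw [key]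
  rw [intervalIntegral.integral_const_mul, master0 t h0 h1]
  field_simp

lemma mpInt1 (t : ℝ) (h0 : 0 < t) (h1 : t < 1) : mpInt t 1 = -t/2 := by
  rw [mpInt]
  have key : ∀ x : ℝ, chebT 1 x * (2/π * Real.sqrt (1-x^2)/(1+2*x*t+t^2))
      = (2/π) * (x * Real.sqrt (1-x^2)/(1+2*x*t+t^2)) := by
    intro x; rw [chebT_one]; ring
  simp_rw [key]
  rw [intervalIntegral.integral_const_mul, master1 t h0 h1]
  field_simp
  ring

lemma mpInt_rec (t : ℝ) (h0 : 0 < t) (h1 : t < 1) (k : ℕ) :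
    mpInt t (k+2) = (2/(π*t)) * (∫ x in (-1:ℝ)..1, chebT (k+1) x * Real.sqrt (1-x^2))
      - ((1+t^2)/t) * mpInt t (k+1) - mpInt t k := by
  have hπ : (0:ℝ) < π := Real.pi_pos
  have key : Set.EqOn
      (fun x : ℝ => chebT (k+2) x * (2/π * Real.sqrt (1-x^2)/(1+2*x*t+t^2)))
      (fun x : ℝ => (2/(π*t)) * (chebT (k+1) x * Real.sqrt (1-x^2))
        - ((1+t^2)/t) * (chebT (k+1) x * (2/π * Real.sqrt (1-x^2)/(1+2*x*t+t^2)))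
        - chebT k x * (2/π * Real.sqrt (1-x^2)/(1+2*x*t+t^2)))
      (Set.uIcc (-1:ℝ) 1) := by
    intro x hx
    rw [Set.uIcc_of_le (by norm_num : (-1:ℝ) ≤ 1)] at hx
    have hD : (0:ℝ) < 1+2*x*t+t^2 := by nlinarith [hx.1, hx.2]
    simp only [chebT_two]
    field_simp
    ring
  rw [mpInt, intervalIntegral.integral_congr key]
  have i1 : IntervalIntegrable (fun x : ℝ => (2/(π*t)) * (chebT (k+1) x * Real.sqrt (1-x^2)))
      MeasureTheory.volume (-1:ℝ) 1 := by
    apply Continuous.intervalIntegrable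
    exact continuous_const.mul ((chebT_cont (k+1)).mul (by continuity))
  have i2 : IntervalIntegrable (fun x : ℝ =>
      ((1+t^2)/t) * (chebT (k+1) x * (2/π * Real.sqrt (1-x^2)/(1+2*x*t+t^2))))
      MeasureTheory.volume (-1:ℝ) 1 :=
    ((continuousOn_const.mul (mpInt_cont t h0 h1 (k+1)))).intervalIntegrable
  have i3 := mpInt_intg t h0 h1 k
  rw [intervalIntegral.integral_sub (i1.sub i2) i3, intervalIntegral.integral_sub i1 i2,
    intervalIntegral.integral_const_mul, intervalIntegral.integral_const_mul]
  rfl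

lemma mpInt_ge2 (t : ℝ) (h0 : 0 < t) (h1 : t < 1) (k : ℕ) :
    mpInt t (k+2) = -(1/2) * (1-t^2) * (-t)^k := by
  have hπ : (0:ℝ) < π := Real.pi_pos
  have ht : t ≠ 0 := ne_of_gt h0
  have base2 : mpInt t 2 = -(1/2) * (1-t^2) * (-t)^0 := by
    have := mpInt_rec t h0 h1 0
    rw [Jcheb1, mpInt1 t h0 h1, mpInt0 t h0 h1] at this
    rw [show (0:ℕ)+2 = 2 from rfl] at this
    rw [this]
    field_simp
    ring
  have base3 : mpInt t 3 = -(1/2) * (1-t^2) * (-t)^1 := by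
    have := mpInt_rec t h0 h1 1
    rw [Jcheb2, mpInt1 t h0 h1, show (1:ℕ)+1 = 2 from rfl, base2] at this
    rw [show (1:ℕ)+2 = 3 from rfl] at this
    rw [this]
    field_simp
    ring
  have H : ∀ k : ℕ, mpInt t (k+2) = -(1/2) * (1-t^2) * (-t)^k ∧
      mpInt t (k+3) = -(1/2) * (1-t^2) * (-t)^(k+1) := by
    intro k
    induction k with
    | zero => exact ⟨base2, by simpa using base3⟩
    | succ n ih =>
      refine ⟨by simpa [Nat.succ_eq_add_one, show n+1+2 = n+3 from rfl] using ih.2, ?_⟩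
      have hrec := mpInt_rec t h0 h1 (n+2)
      rw [Jcheb_big (n+3) (by omega), show n+2+1 = n+3 from rfl, show n+2+2 = n+4 from rfl] at hrec
      rw [show n+1+3 = n+4 from rfl, hrec, show n+2+1 = n+3 from rfl] at *
      rw [ih.1, ih.2]
      field_simp
      ring
  exact (H k).1

/-- Chebyshev expansion integrals of the shifted/scaled Marchenko–Pastur density
`ψ̃(λ) = (2/π) √(1−λ²)/(1 + 2λ√φ + φ)` on `[−1,1]`, for `0 < φ < 1`:
the value is `1` for `k = 0`, `−√φ/2` for `k = 1`, and
`−(1/2)(1−φ)(−√φ)^{k−2}` for `k ≥ 2`. -/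
theorem marchenkoPastur_chebyshev_integral (φ : ℝ) (hφ0 : 0 < φ) (hφ1 : φ < 1) (k : ℕ) :
    (∫ x in (-1 : ℝ)..1,
        chebT k x * (2 / Real.pi * Real.sqrt (1 - x ^ 2) / (1 + 2 * x * Real.sqrt φ + φ))) =
      if k = 0 then (1 : ℝ)
      else if k = 1 then -Real.sqrt φ / 2
      else -(1 / 2) * (1 - φ) * (-Real.sqrt φ) ^ (k - 2) := by
  set t := Real.sqrt φ with ht
  have h0 : 0 < t := Real.sqrt_pos.2 hφ0
  have h1 : t < 1 := by
    rw [ht]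
    have := Real.sqrt_lt_sqrt hφ0.le hφ1
    simpa using this
  have hφ : φ = t^2 := (Real.sq_sqrt hφ0.le).symm
  rw [hφ]
  rw [show (∫ x in (-1:ℝ)..1, chebT k x * (2/π * Real.sqrt (1-x^2)/(1+2*x*t+t^2)))
      = mpInt t k from rfl]
  rcases k with _|_|n
  · simp [mpInt0 t h0 h1]
  · simp [mpInt1 t h0 h1]
  · rw [mpInt_ge2 t h0 h1 n]
    simp
end
end
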